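/- arXiv:2604.03707 — 3 statements merged into one kernel-verified Lean document; each statement's English description precedes it below -/
import Mathlib

section
/- Let V be an n-dimensional real vector space and let 0 ≤ k, l ≤ n. The operation * : End(∧^k V) × End(∧^l V) → End(∧^{k+l} V) is associative, commutative, and ℝ-bilinear. -/
open ExteriorAlgebra

variable {V : Type} [AddCommGroup V] [Module ℝ V]

/-- The canonical `k`-fold wedge `v₁ ∧ ⋯ ∧ v_k` as an element of the `k`-th exterior power. -/
noncomputable def iMultiP (k : ℕ) (v : Fin k → V) : ⋀[ℝ]^k V :=
  ⟨ExteriorAlgebra.ιMulti ℝ k v, ExteriorAlgebra.ιMulti_range ℝ k (Set.mem_range_self v)⟩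

/-- `IsStarMul k l A B AB` says `AB = A * B` per Bivens' definition. -/
def IsStarMul (k l : ℕ) (A : Module.End ℝ (⋀[ℝ]^k V)) (B : Module.End ℝ (⋀[ℝ]^l V))
    (AB : Module.End ℝ (⋀[ℝ]^(k+l) V)) : Prop :=
  ∀ x : Fin (k + l) → V,
    (AB (iMultiP (k+l) x) : ExteriorAlgebra ℝ V)
      = ((k.factorial * l.factorial : ℕ) : ℝ)⁻¹ •
        ∑ σ : Equiv.Perm (Fin (k + l)), ((Equiv.Perm.sign σ : ℤ) : ℝ) •
          ((A (iMultiP k (fun i => x (σ (Fin.castAdd l i)))) : ExteriorAlgebra ℝ V) *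
           (B (iMultiP l (fun j => x (σ (Fin.natAdd k j)))) : ExteriorAlgebra ℝ V))

noncomputable def altWedge {k l : ℕ} (α : V [⋀^Fin k]→ₗ[ℝ] ℝ) (β : V [⋀^Fin l]→ₗ[ℝ] ℝ) :
    V [⋀^Fin (k + l)]→ₗ[ℝ] ℝ :=
  AlternatingMap.domDomCongr finSumFinEquiv
    ((TensorProduct.lid ℝ ℝ).toLinearMap.compAlternatingMap (α.domCoprod β))

noncomputable def altCast {a b : ℕ} (h : a = b) (ω : V [⋀^Fin a]→ₗ[ℝ] ℝ) :
    V [⋀^Fin b]→ₗ[ℝ] ℝ :=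
  ω.domDomCongr (finCongr h)

noncomputable def wedgeList : (m : ℕ) → (Fin m → (V [⋀^Fin 2]→ₗ[ℝ] ℝ)) → (V [⋀^Fin (2*m)]→ₗ[ℝ] ℝ)
  | 0, _ => altCast (by ring) (AlternatingMap.constOfIsEmpty ℝ V (Fin 0) 1)
  | (m+1), ω => altCast (by ring)
      (altWedge (wedgeList m (fun a => ω a.castSucc)) (ω (Fin.last m)))

noncomputable def sgnIJ {m n : ℕ} (I J : Fin m → Fin n) : ℝ :=
  if h : Function.Injective I ∧ ∃ τ : Equiv.Perm (Fin m), J = I ∘ τ then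
    ((Equiv.Perm.sign h.2.choose : ℤ) : ℝ)
  else 0

noncomputable def epsI {m n : ℕ} (eps : Fin n → ℝ) (I : Fin m → Fin n) : ℝ :=
  if Function.Injective I then ∏ a, eps (I a) else 0

noncomputable def pontryaginForm (n k : ℕ) (Ω : Fin n → Fin n → (V [⋀^Fin 2]→ₗ[ℝ] ℝ)) :
    V [⋀^Fin (4*k)]→ₗ[ℝ] ℝ :=
  (((2 * Real.pi) ^ (2*k))⁻¹ * (((2*k).factorial : ℕ) : ℝ)⁻¹) •
    ∑ I : Fin (2*k) → Fin n, ∑ J : Fin (2*k) → Fin n,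
      sgnIJ I J • altCast (by ring) (wedgeList (2*k) (fun a => Ω (I a) (J a)))

def IsACT (C : V → V → V → V → ℝ) : Prop :=
  ((∀ (a : ℝ) (u u' v x y : V), C (a • u + u') v x y = a * C u v x y + C u' v x y) ∧
   (∀ (a : ℝ) (u v v' x y : V), C u (a • v + v') x y = a * C u v x y + C u v' x y) ∧
   (∀ (a : ℝ) (u v x x' y : V), C u v (a • x + x') y = a * C u v x y + C u v x' y) ∧
   (∀ (a : ℝ) (u v x y y' : V), C u v x (a • y + y') = a * C u v x y + C u v x y')) ∧
  (∀ u v x y, C u v x y = -C v u x y) ∧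
  (∀ u v x y, C u v x y = -C u v y x) ∧
  (∀ u v x y, C u v x y = C x y u v) ∧
  (∀ u v x y, C u v x y + C x u v y + C v x u y = 0)

def IsInducedForm (g : LinearMap.BilinForm ℝ V) (k : ℕ)
    (B : LinearMap.BilinForm ℝ (⋀[ℝ]^k V)) : Prop :=
  ∀ v w : Fin k → V,
    B (iMultiP k v) (iMultiP k w) = Matrix.det (Matrix.of fun i j => g (v i) (w j))

def IsCurvOp (C : V → V → V → V → ℝ) (B2 : LinearMap.BilinForm ℝ (⋀[ℝ]^2 V))
    (Chat : Module.End ℝ (⋀[ℝ]^2 V)) : Prop :=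
  ∀ u v x y : V, B2 (Chat (iMultiP 2 ![u, v])) (iMultiP 2 ![x, y]) = C u v x y

def IsCurvMatrix (g : LinearMap.BilinForm ℝ V) (C : V → V → V → V → ℝ) {n : ℕ}
    (e : Fin n → V) (Ω : Fin n → Fin n → (V [⋀^Fin 2]→ₗ[ℝ] ℝ)) : Prop :=
  ∀ (x y : V) (i m : Fin n), C x y (e i) (e m) = ∑ j, Ω i j ![x, y] * g (e j) (e m)

def IsExtPowMap (k : ℕ) (θ : V →ₗ[ℝ] V) (T : Module.End ℝ (⋀[ℝ]^k V)) : Prop :=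
  ∀ v : Fin k → V,
    (T (iMultiP k v) : ExteriorAlgebra ℝ V) = ExteriorAlgebra.ιMulti ℝ k (fun i => θ (v i))

noncomputable def Fform (m : ℕ) (Bm : LinearMap.BilinForm ℝ (⋀[ℝ]^m V))
    (A B : Module.End ℝ (⋀[ℝ]^m V)) : (Fin (m + m) → V) → ℝ :=
  fun x => (((m.factorial : ℕ) : ℝ)^2)⁻¹ * ∑ σ : Equiv.Perm (Fin (m + m)),
    ((Equiv.Perm.sign σ : ℤ) : ℝ) *
      Bm (A (iMultiP m (fun i => x (σ (Fin.castAdd m i)))))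
         (B (iMultiP m (fun i => x (σ (Fin.natAdd m i)))))

noncomputable def ricci {n : ℕ} (C : V → V → V → V → ℝ) (b d : Fin n → V) : V → V → ℝ :=
  fun x y => ∑ j, C (d j) x y (b j)

noncomputable def scalCurv {n : ℕ} (C : V → V → V → V → ℝ) (b d : Fin n → V) : ℝ :=
  ∑ j, ricci C b d (d j) (b j)

noncomputable def schouten {n : ℕ} (g : LinearMap.BilinForm ℝ V) (C : V → V → V → V → ℝ)
    (b d : Fin n → V) : V → V → ℝ :=
  fun x y => (1/((n : ℝ) - 2)) *
    (ricci C b d x y - (scalCurv C b d / (2*((n : ℝ) - 1))) * g x y)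

def kulkarniNomizu (h k : V → V → ℝ) : V → V → V → V → ℝ :=
  fun u v x y => h u y * k v x + h v x * k u y - h u x * k v y - h v y * k u x

noncomputable def weyl {n : ℕ} (g : LinearMap.BilinForm ℝ V) (C : V → V → V → V → ℝ)
    (b d : Fin n → V) : V → V → V → V → ℝ :=
  fun u v x y => C u v x y -
    kulkarniNomizu (schouten g C b d) (fun a b' => g a b') u v x y

noncomputable def wedgeBig : (L : List ((d : ℕ) × (V [⋀^Fin d]→ₗ[ℝ] ℝ))) →
    V [⋀^Fin ((L.map Sigma.fst).sum)]→ₗ[ℝ] ℝ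
  | [] => altCast (by simp) (AlternatingMap.constOfIsEmpty ℝ V (Fin 0) 1)
  | p :: L => altCast (by simp) (altWedge p.2 (wedgeBig L))


lemma iMultiP_coe (k : ℕ) (v : Fin k → V) :
    (iMultiP k v : ExteriorAlgebra ℝ V) = ιMulti ℝ k v := rfl

/-- induction principle for exterior powers -/
lemma powInduction {n : ℕ} {P : ⋀[ℝ]^n V → Prop}
    (hgen : ∀ v : Fin n → V, P (iMultiP n v)) (h0 : P 0)
    (hadd : ∀ a b, P a → P b → P (a + b))
    (hsmul : ∀ (c : ℝ) a, P a → P (c • a)) : ∀ ξ, P ξ := by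
  rintro ⟨x, hx⟩
  have hx' : x ∈ Submodule.span ℝ (Set.range (ιMulti ℝ n (M := V))) := by
    rw [ιMulti_span_fixedDegree]; exact hx
  refine Submodule.span_induction
    (p := fun y _ => ∀ (hm : y ∈ ⋀[ℝ]^n V), P ⟨y, hm⟩) ?_ ?_ ?_ ?_ hx' hx
  · rintro _ ⟨v, rfl⟩ hm
    exact hgen v
  · intro hm
    exact h0
  · intro a b ha hb pa pb hm
    have ham : a ∈ ⋀[ℝ]^n V := by rw [← ιMulti_span_fixedDegree (R := ℝ)]; exact ha
    have hbm : b ∈ ⋀[ℝ]^n V := by rw [← ιMulti_span_fixedDegree (R := ℝ)]; exact hb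
    exact hadd ⟨a, ham⟩ ⟨b, hbm⟩ (pa ham) (pb hbm)
  · intro c a ha pa hm
    have ham : a ∈ ⋀[ℝ]^n V := by rw [← ιMulti_span_fixedDegree (R := ℝ)]; exact ha
    exact hsmul c ⟨a, ham⟩ (pa ham)

lemma ιMulti_cast {a b : ℕ} (h : a = b) (v : Fin b → V) :
    ιMulti ℝ a (fun i => v (Fin.cast h i)) = ιMulti ℝ b v := by
  subst h; rfl

lemma ιMulti_split (k l : ℕ) (x : Fin (k + l) → V) :
    ιMulti ℝ (k + l) x
      = ιMulti ℝ k (fun i => x (Fin.castAdd l i)) * ιMulti ℝ l (fun j => x (Fin.natAdd k j)) := by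
  rw [ιMulti_apply, ιMulti_apply, ιMulti_apply, List.ofFn_add (f := fun i => (ι ℝ) (x i)),
    List.prod_append]
  rfl

lemma rotpow_val (q : ℕ) {N : ℕ} (x : Fin N) :
    (((finRotate N) ^ q) x).val = (x.val + q) % N := by
  induction q generalizing x with
  | zero => simp [Nat.mod_eq_of_lt x.isLt]
  | succ q ih =>
    rw [pow_succ', Equiv.Perm.mul_apply]
    match N, x with
    | 1, x => simp [Nat.mod_one]
    | (n+2), x =>
      rw [finRotate_succ_apply, Fin.add_def]
      simp only [Fin.val_one]
      rw [ih, Nat.mod_add_mod, Nat.add_assoc]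

/-- the block-rotation permutation: rotation by `l` in `Fin (k+l)` -/
noncomputable def blockRot (k l : ℕ) : Equiv.Perm (Fin (k + l)) := (finRotate (k + l)) ^ l

lemma blockRot_castAdd (k l : ℕ) (i : Fin k) :
    blockRot k l (Fin.castAdd l i) = Fin.cast (Nat.add_comm l k) (Fin.natAdd l i) := by
  apply Fin.ext
  rw [blockRot, rotpow_val]
  simp only [Fin.coe_castAdd, Fin.coe_cast, Fin.coe_natAdd]
  have := i.isLt
  rw [Nat.mod_eq_of_lt (by omega)]
  omega

lemma blockRot_natAdd (k l : ℕ) (j : Fin l) :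
    blockRot k l (Fin.natAdd k j) = Fin.cast (Nat.add_comm l k) (Fin.castAdd k j) := by
  apply Fin.ext
  rw [blockRot, rotpow_val]
  simp only [Fin.coe_natAdd, Fin.coe_cast, Fin.coe_castAdd]
  have := j.isLt
  rw [show k + ↑j + l = ↑j + (k + l) by omega, Nat.add_mod_right,
    Nat.mod_eq_of_lt (by omega)]

lemma sign_blockRot (k l : ℕ) :
    Equiv.Perm.sign (blockRot k l) = ((-1 : ℤˣ)) ^ (k * l) := by
  rcases Nat.eq_zero_or_pos l with rfl | hl
  · simp [blockRot]
  · obtain ⟨n, hn⟩ : ∃ n, k + l = n + 1 := ⟨k + l - 1, by omega⟩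
    rw [blockRot, map_pow, hn, sign_finRotate, ← pow_mul]
    have hpar : n * l = k * l + (l - 1) * l := by
      have h1 : n = k + (l - 1) := by omega
      rw [h1, Nat.add_mul]
    rw [Nat.add_sub_cancel, hpar, pow_add]
    have hev : Even ((l - 1) * l) := by
      have := Nat.even_mul_succ_self (l - 1)
      rwa [show l - 1 + 1 = l by omega] at this
    rw [Even.neg_one_pow hev, mul_one]

lemma intUnits_smul (s : ℤˣ) (x : ExteriorAlgebra ℝ V) : s • x = ((s : ℤ) : ℝ) • x := by
  rw [Units.smul_def, Int.cast_smul_eq_zsmul]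

lemma ιMulti_append (k l : ℕ) (u : Fin k → V) (w : Fin l → V) :
    ιMulti ℝ k u * ιMulti ℝ l w = ιMulti ℝ (k + l) (Fin.append u w) := by
  rw [ιMulti_split]
  congr 1
  · exact congrArg _ (funext fun i => (Fin.append_left u w i).symm)
  · exact congrArg _ (funext fun j => (Fin.append_right u w j).symm)

lemma coe_mul_comm (k l : ℕ) (a : ⋀[ℝ]^k V) (b : ⋀[ℝ]^l V) :
    (a : ExteriorAlgebra ℝ V) * (b : ExteriorAlgebra ℝ V)
      = ((-1 : ℝ) ^ (k * l)) • ((b : ExteriorAlgebra ℝ V) * (a : ExteriorAlgebra ℝ V)) := by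
  induction a using powInduction with
  | hgen u =>
    induction b using powInduction with
    | hgen w =>
      rw [iMultiP_coe, iMultiP_coe, ιMulti_append, ιMulti_append]
      have h3 : Fin.append u w
          = (fun j => Fin.append w u (Fin.cast (Nat.add_comm k l) j)) ∘ (blockRot k l) := by
        funext t
        refine Fin.addCases (fun i => ?_) (fun j => ?_) t
        · rw [Function.comp_apply, blockRot_castAdd]
          simp [Fin.append_left, Fin.append_right]
        · rw [Function.comp_apply, blockRot_natAdd]
          simp [Fin.append_left, Fin.append_right]
      rw [h3, AlternatingMap.map_perm, sign_blockRot, intUnits_smul]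
      have h4 : ιMulti ℝ (k + l) (fun j => Fin.append w u (Fin.cast (Nat.add_comm k l) j))
          = ιMulti ℝ (l + k) (Fin.append w u) :=
        ιMulti_cast (Nat.add_comm k l) (Fin.append w u)
      rw [h4]
      push_cast
      ring_nf
    | h0 => simp
    | hadd b b' hb hb' => simp [mul_add, add_mul, smul_add, hb, hb']
    | hsmul c b hb => simp only [SetLike.val_smul, mul_smul_comm, smul_mul_assoc, hb]; rw [smul_comm]
  | h0 => simp
  | hadd a a' ha ha' => simp [mul_add, add_mul, smul_add, ha, ha']
  | hsmul c a ha => simp only [SetLike.val_smul, mul_smul_comm, smul_mul_assoc, ha]; rw [smul_comm]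

noncomputable def extPermL (a b : ℕ) (τ : Equiv.Perm (Fin a)) : Equiv.Perm (Fin (a + b)) :=
  Equiv.permCongr finSumFinEquiv (Equiv.sumCongr τ (Equiv.refl (Fin b)))

noncomputable def extPermR (a b : ℕ) (τ : Equiv.Perm (Fin b)) : Equiv.Perm (Fin (a + b)) :=
  Equiv.permCongr finSumFinEquiv (Equiv.sumCongr (Equiv.refl (Fin a)) τ)

@[simp] lemma extPermL_castAdd (a b : ℕ) (τ : Equiv.Perm (Fin a)) (i : Fin a) :
    extPermL a b τ (Fin.castAdd b i) = Fin.castAdd b (τ i) := by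
  simp [extPermL]

@[simp] lemma extPermL_natAdd (a b : ℕ) (τ : Equiv.Perm (Fin a)) (j : Fin b) :
    extPermL a b τ (Fin.natAdd a j) = Fin.natAdd a j := by
  simp [extPermL]

@[simp] lemma extPermR_castAdd (a b : ℕ) (τ : Equiv.Perm (Fin b)) (i : Fin a) :
    extPermR a b τ (Fin.castAdd b i) = Fin.castAdd b i := by
  simp [extPermR]

@[simp] lemma extPermR_natAdd (a b : ℕ) (τ : Equiv.Perm (Fin b)) (j : Fin b) :
    extPermR a b τ (Fin.natAdd a j) = Fin.natAdd a (τ j) := by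
  simp [extPermR]

@[simp] lemma sign_extPermL (a b : ℕ) (τ : Equiv.Perm (Fin a)) :
    Equiv.Perm.sign (extPermL a b τ) = Equiv.Perm.sign τ := by
  simp [extPermL]

@[simp] lemma sign_extPermR (a b : ℕ) (τ : Equiv.Perm (Fin b)) :
    Equiv.Perm.sign (extPermR a b τ) = Equiv.Perm.sign τ := by
  simp [extPermR]

lemma end_ext {n : ℕ} (S T : Module.End ℝ (⋀[ℝ]^n V))
    (h : ∀ v, (S (iMultiP n v) : ExteriorAlgebra ℝ V) = T (iMultiP n v)) : S = T := by
  have key : ∀ ξ, (S ξ : ExteriorAlgebra ℝ V) = T ξ := by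
    refine powInduction h ?_ ?_ ?_
    · simp
    · intro a b ha hb; simp [map_add, ha, hb]
    · intro c a ha; simp [map_smul, ha]
  refine LinearMap.ext fun ξ => Subtype.ext ?_
  exact congrArg Subtype.val (Subtype.ext (key ξ))

lemma comm_key (k l : ℕ) (A : Module.End ℝ (⋀[ℝ]^k V)) (B : Module.End ℝ (⋀[ℝ]^l V))
    (AB : Module.End ℝ (⋀[ℝ]^(k+l) V)) (hAB : IsStarMul k l A B AB)
    (BA : Module.End ℝ (⋀[ℝ]^(l+k) V)) (hBA : IsStarMul l k B A BA)
    (v : Fin (k + l) → V) :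
    (AB (iMultiP (k+l) v) : ExteriorAlgebra ℝ V)
      = (BA (iMultiP (l+k) (fun j => v (Fin.cast (Nat.add_comm l k) j))) : ExteriorAlgebra ℝ V) := by
  rw [hAB v, hBA _]
  have hc : ((l.factorial * k.factorial : ℕ) : ℝ)⁻¹
      = ((k.factorial * l.factorial : ℕ) : ℝ)⁻¹ := by rw [Nat.mul_comm]
  rw [hc]
  congr 1
  set e : Fin (l + k) ≃ Fin (k + l) := finCongr (Nat.add_comm l k) with he
  set Φ : Equiv.Perm (Fin (l + k)) ≃ Equiv.Perm (Fin (k + l)) :=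
    (Equiv.permCongr e).trans (Equiv.mulRight (blockRot k l)) with hΦ
  rw [← Equiv.sum_comp Φ]
  apply Finset.sum_congr rfl
  intro τ _
  have hΦτ : ∀ t, Φ τ t = e (τ (e.symm (blockRot k l t))) := by
    intro t; rfl
  have hA : (fun i => v ((Φ τ) (Fin.castAdd l i)))
      = (fun i => v (Fin.cast (Nat.add_comm l k) (τ (Fin.natAdd l i)))) := by
    funext i
    rw [hΦτ, blockRot_castAdd]
    exact congrArg v (by apply Fin.ext; simp [he])
  have hB : (fun j => v ((Φ τ) (Fin.natAdd k j)))
      = (fun j => v (Fin.cast (Nat.add_comm l k) (τ (Fin.castAdd k j)))) := by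
    funext j
    rw [hΦτ, blockRot_natAdd]
    exact congrArg v (by apply Fin.ext; simp [he])
  rw [hA, hB, coe_mul_comm l k (B _) (A _), smul_smul]
  have hsign : Equiv.Perm.sign (Φ τ) = Equiv.Perm.sign τ * (-1 : ℤˣ) ^ (k * l) := by
    have : Φ τ = (Equiv.permCongr e τ) * blockRot k l := rfl
    rw [this, Equiv.Perm.sign_mul, Equiv.Perm.sign_permCongr, sign_blockRot]
  rw [hsign]
  congr 1
  push_cast
  ring_nf

lemma sgnR_mul_self {n : ℕ} (τ : Equiv.Perm (Fin n)) :
    ((Equiv.Perm.sign τ : ℤ) : ℝ) * ((Equiv.Perm.sign τ : ℤ) : ℝ) = 1 := by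
  rw [← Int.cast_mul, ← Units.val_mul, Int.units_mul_self, Units.val_one, Int.cast_one]

noncomputable def canonSum (k l m : ℕ) (A : Module.End ℝ (⋀[ℝ]^k V))
    (B : Module.End ℝ (⋀[ℝ]^l V)) (Cm : Module.End ℝ (⋀[ℝ]^m V))
    (v : Fin (k+l+m) → V) : ExteriorAlgebra ℝ V :=
  ∑ ρ : Equiv.Perm (Fin (k+l+m)), ((Equiv.Perm.sign ρ : ℤ) : ℝ) •
    ((A (iMultiP k fun i => v (ρ (Fin.castAdd m (Fin.castAdd l i)))) : ExteriorAlgebra ℝ V) *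
     (B (iMultiP l fun i => v (ρ (Fin.castAdd m (Fin.natAdd k i)))) : ExteriorAlgebra ℝ V) *
     (Cm (iMultiP m fun i => v (ρ (Fin.natAdd (k+l) i))) : ExteriorAlgebra ℝ V))

lemma assoc1 (k l m : ℕ) (A : Module.End ℝ (⋀[ℝ]^k V)) (B : Module.End ℝ (⋀[ℝ]^l V))
    (Cm : Module.End ℝ (⋀[ℝ]^m V))
    (AB : Module.End ℝ (⋀[ℝ]^(k+l) V)) (hAB : IsStarMul k l A B AB)
    (ABC₁ : Module.End ℝ (⋀[ℝ]^(k+l+m) V)) (hABC₁ : IsStarMul (k+l) m AB Cm ABC₁)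
    (v : Fin (k+l+m) → V) :
    (ABC₁ (iMultiP (k+l+m) v) : ExteriorAlgebra ℝ V)
      = ((k.factorial * (l.factorial * m.factorial) : ℕ) : ℝ)⁻¹ • canonSum k l m A B Cm v := by
  rw [hABC₁ v]
  have e1 : ∀ σ : Equiv.Perm (Fin (k+l+m)),
      ((Equiv.Perm.sign σ : ℤ) : ℝ) •
        ((AB (iMultiP (k+l) (fun i => v (σ (Fin.castAdd m i)))) : ExteriorAlgebra ℝ V) *
         (Cm (iMultiP m (fun j => v (σ (Fin.natAdd (k+l) j)))) : ExteriorAlgebra ℝ V))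
      = ((k.factorial * l.factorial : ℕ) : ℝ)⁻¹ •
          ∑ τ : Equiv.Perm (Fin (k+l)),
            (((Equiv.Perm.sign σ : ℤ) : ℝ) * ((Equiv.Perm.sign τ : ℤ) : ℝ)) •
              ((A (iMultiP k fun i => v (σ (Fin.castAdd m (τ (Fin.castAdd l i))))) : ExteriorAlgebra ℝ V) *
               (B (iMultiP l fun i => v (σ (Fin.castAdd m (τ (Fin.natAdd k i))))) : ExteriorAlgebra ℝ V) *
               (Cm (iMultiP m fun i => v (σ (Fin.natAdd (k+l) i))) : ExteriorAlgebra ℝ V)) := by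
    intro σ
    rw [hAB, smul_mul_assoc, Finset.sum_mul,
      smul_comm (((Equiv.Perm.sign σ : ℤ) : ℝ)) (((k.factorial * l.factorial : ℕ) : ℝ))⁻¹,
      Finset.smul_sum]
    congr 1
    refine Finset.sum_congr rfl fun τ _ => ?_
    rw [smul_mul_assoc, smul_smul]
  rw [Finset.sum_congr rfl (fun σ _ => e1 σ), ← Finset.smul_sum, smul_smul, Finset.sum_comm]
  have inner : ∀ τ : Equiv.Perm (Fin (k+l)),
      (∑ σ : Equiv.Perm (Fin (k+l+m)),
        (((Equiv.Perm.sign σ : ℤ) : ℝ) * ((Equiv.Perm.sign τ : ℤ) : ℝ)) •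
          ((A (iMultiP k fun i => v (σ (Fin.castAdd m (τ (Fin.castAdd l i))))) : ExteriorAlgebra ℝ V) *
           (B (iMultiP l fun i => v (σ (Fin.castAdd m (τ (Fin.natAdd k i))))) : ExteriorAlgebra ℝ V) *
           (Cm (iMultiP m fun i => v (σ (Fin.natAdd (k+l) i))) : ExteriorAlgebra ℝ V)))
      = canonSum k l m A B Cm v := by
    intro τ
    rw [← Equiv.sum_comp (Equiv.mulRight ((extPermL (k+l) m τ)⁻¹))]
    refine Finset.sum_congr rfl fun ρ _ => ?_
    simp only [Equiv.coe_mulRight]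
    have hc1 : ∀ s : Fin (k+l),
        (ρ * (extPermL (k+l) m τ)⁻¹) (Fin.castAdd m (τ s)) = ρ (Fin.castAdd m s) := by
      intro s
      rw [Equiv.Perm.mul_apply, ← extPermL_castAdd (k+l) m τ s, Equiv.Perm.inv_def, Equiv.symm_apply_apply]
    have hc2 : ∀ j : Fin m,
        (ρ * (extPermL (k+l) m τ)⁻¹) (Fin.natAdd (k+l) j) = ρ (Fin.natAdd (k+l) j) := by
      intro j
      conv_lhs => rw [Equiv.Perm.mul_apply, ← extPermL_natAdd (k+l) m τ j,
        Equiv.Perm.inv_def, Equiv.symm_apply_apply]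
    have hA : (fun i => v ((ρ * (extPermL (k+l) m τ)⁻¹) (Fin.castAdd m (τ (Fin.castAdd l i)))))
        = fun i => v (ρ (Fin.castAdd m (Fin.castAdd l i))) :=
      funext fun i => congrArg v (hc1 _)
    have hB : (fun i => v ((ρ * (extPermL (k+l) m τ)⁻¹) (Fin.castAdd m (τ (Fin.natAdd k i)))))
        = fun i => v (ρ (Fin.castAdd m (Fin.natAdd k i))) :=
      funext fun i => congrArg v (hc1 _)
    have hC : (fun i => v ((ρ * (extPermL (k+l) m τ)⁻¹) (Fin.natAdd (k+l) i)))
        = fun i => v (ρ (Fin.natAdd (k+l) i)) :=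
      funext fun i => congrArg v (hc2 _)
    rw [hA, hB, hC]
    congr 1
    rw [Equiv.Perm.sign_mul, Equiv.Perm.sign_inv, sign_extPermL]
    push_cast [Units.val_mul]
    rw [mul_assoc, sgnR_mul_self, mul_one]
  rw [Finset.sum_congr rfl (fun τ _ => inner τ), Finset.sum_const, Finset.card_univ,
    Fintype.card_perm, Fintype.card_fin, ← Nat.cast_smul_eq_nsmul ℝ, smul_smul]
  congr 1
  have h1 : ((k+l).factorial : ℝ) ≠ 0 := Nat.cast_ne_zero.2 (Nat.factorial_ne_zero _)
  have h2 : (k.factorial : ℝ) ≠ 0 := Nat.cast_ne_zero.2 (Nat.factorial_ne_zero _)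
  have h3 : (l.factorial : ℝ) ≠ 0 := Nat.cast_ne_zero.2 (Nat.factorial_ne_zero _)
  have h4 : (m.factorial : ℝ) ≠ 0 := Nat.cast_ne_zero.2 (Nat.factorial_ne_zero _)
  push_cast
  field_simp

lemma assoc2 (k l m : ℕ) (A : Module.End ℝ (⋀[ℝ]^k V)) (B : Module.End ℝ (⋀[ℝ]^l V))
    (Cm : Module.End ℝ (⋀[ℝ]^m V))
    (BC : Module.End ℝ (⋀[ℝ]^(l+m) V)) (hBC : IsStarMul l m B Cm BC)
    (ABC₂ : Module.End ℝ (⋀[ℝ]^(k+(l+m)) V)) (hABC₂ : IsStarMul k (l+m) A BC ABC₂)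
    (v : Fin (k+l+m) → V) :
    (ABC₂ (iMultiP (k+(l+m)) (fun j => v (Fin.cast (Nat.add_assoc k l m).symm j)))
        : ExteriorAlgebra ℝ V)
      = ((k.factorial * (l.factorial * m.factorial) : ℕ) : ℝ)⁻¹ • canonSum k l m A B Cm v := by
  set w : Fin (k+(l+m)) → V := fun j => v (Fin.cast (Nat.add_assoc k l m).symm j) with hw
  rw [hABC₂ w]
  have e1 : ∀ σ : Equiv.Perm (Fin (k+(l+m))),
      ((Equiv.Perm.sign σ : ℤ) : ℝ) •
        ((A (iMultiP k (fun i => w (σ (Fin.castAdd (l+m) i)))) : ExteriorAlgebra ℝ V) *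
         (BC (iMultiP (l+m) (fun j => w (σ (Fin.natAdd k j)))) : ExteriorAlgebra ℝ V))
      = ((l.factorial * m.factorial : ℕ) : ℝ)⁻¹ •
          ∑ τ : Equiv.Perm (Fin (l+m)),
            (((Equiv.Perm.sign σ : ℤ) : ℝ) * ((Equiv.Perm.sign τ : ℤ) : ℝ)) •
              ((A (iMultiP k fun i => w (σ (Fin.castAdd (l+m) i))) : ExteriorAlgebra ℝ V) *
               ((B (iMultiP l fun i => w (σ (Fin.natAdd k (τ (Fin.castAdd m i))))) : ExteriorAlgebra ℝ V) *
                (Cm (iMultiP m fun i => w (σ (Fin.natAdd k (τ (Fin.natAdd l i))))) : ExteriorAlgebra ℝ V))) := by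
    intro σ
    rw [hBC, mul_smul_comm, Finset.mul_sum,
      smul_comm (((Equiv.Perm.sign σ : ℤ) : ℝ)) (((l.factorial * m.factorial : ℕ) : ℝ))⁻¹,
      Finset.smul_sum]
    congr 1
    refine Finset.sum_congr rfl fun τ _ => ?_
    rw [mul_smul_comm, smul_smul]
  rw [Finset.sum_congr rfl (fun σ _ => e1 σ), ← Finset.smul_sum, smul_smul, Finset.sum_comm]
  have inner : ∀ τ : Equiv.Perm (Fin (l+m)),
      (∑ σ : Equiv.Perm (Fin (k+(l+m))),
        (((Equiv.Perm.sign σ : ℤ) : ℝ) * ((Equiv.Perm.sign τ : ℤ) : ℝ)) •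
          ((A (iMultiP k fun i => w (σ (Fin.castAdd (l+m) i))) : ExteriorAlgebra ℝ V) *
           ((B (iMultiP l fun i => w (σ (Fin.natAdd k (τ (Fin.castAdd m i))))) : ExteriorAlgebra ℝ V) *
            (Cm (iMultiP m fun i => w (σ (Fin.natAdd k (τ (Fin.natAdd l i))))) : ExteriorAlgebra ℝ V))))
      = canonSum k l m A B Cm v := by
    intro τ
    set ec : Fin (k+l+m) ≃ Fin (k+(l+m)) := finCongr (Nat.add_assoc k l m) with hec
    set Θ : Equiv.Perm (Fin (k+l+m)) ≃ Equiv.Perm (Fin (k+(l+m))) :=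
      (Equiv.permCongr ec).trans (Equiv.mulRight ((extPermR k (l+m) τ)⁻¹)) with hΘ
    rw [← Equiv.sum_comp Θ]
    refine Finset.sum_congr rfl fun ρ _ => ?_
    have hΘρ : ∀ t, Θ ρ t = ec (ρ (ec.symm ((extPermR k (l+m) τ)⁻¹ t))) := fun t => rfl
    have key1 : ∀ i : Fin k, w (Θ ρ (Fin.castAdd (l+m) i))
        = v (ρ (Fin.castAdd m (Fin.castAdd l i))) := by
      intro i
      rw [hΘρ]
      have h1 : (extPermR k (l+m) τ)⁻¹ (Fin.castAdd (l+m) i) = Fin.castAdd (l+m) i := by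
        conv_lhs => rw [← extPermR_castAdd k (l+m) τ i]
        rw [Equiv.Perm.inv_def, Equiv.symm_apply_apply]
      rw [h1]
      have h2 : ec.symm (Fin.castAdd (l+m) i) = Fin.castAdd m (Fin.castAdd l i) := by
        apply Fin.ext; simp [hec]
      rw [h2, hw]
      exact congrArg v (by apply Fin.ext; simp [hec])
    have key2 : ∀ i : Fin l, w (Θ ρ (Fin.natAdd k (τ (Fin.castAdd m i))))
        = v (ρ (Fin.castAdd m (Fin.natAdd k i))) := by
      intro i
      rw [hΘρ]
      have h1 : (extPermR k (l+m) τ)⁻¹ (Fin.natAdd k (τ (Fin.castAdd m i)))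
          = Fin.natAdd k (Fin.castAdd m i) := by
        conv_lhs => rw [← extPermR_natAdd k (l+m) τ (Fin.castAdd m i)]
        rw [Equiv.Perm.inv_def, Equiv.symm_apply_apply]
      rw [h1]
      have h2 : ec.symm (Fin.natAdd k (Fin.castAdd m i)) = Fin.castAdd m (Fin.natAdd k i) := by
        apply Fin.ext; simp [hec]
      rw [h2, hw]
      exact congrArg v (by apply Fin.ext; simp [hec])
    have key3 : ∀ i : Fin m, w (Θ ρ (Fin.natAdd k (τ (Fin.natAdd l i))))
        = v (ρ (Fin.natAdd (k+l) i)) := by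
      intro i
      rw [hΘρ]
      have h1 : (extPermR k (l+m) τ)⁻¹ (Fin.natAdd k (τ (Fin.natAdd l i)))
          = Fin.natAdd k (Fin.natAdd l i) := by
        conv_lhs => rw [← extPermR_natAdd k (l+m) τ (Fin.natAdd l i)]
        rw [Equiv.Perm.inv_def, Equiv.symm_apply_apply]
      rw [h1]
      have h2 : ec.symm (Fin.natAdd k (Fin.natAdd l i)) = Fin.natAdd (k+l) i := by
        apply Fin.ext; simp [hec, Nat.add_assoc]
      rw [h2, hw]
      exact congrArg v (by apply Fin.ext; simp [hec])
    have hA : (fun i => w (Θ ρ (Fin.castAdd (l+m) i)))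
        = fun i => v (ρ (Fin.castAdd m (Fin.castAdd l i))) := funext key1
    have hB' : (fun i => w (Θ ρ (Fin.natAdd k (τ (Fin.castAdd m i)))))
        = fun i => v (ρ (Fin.castAdd m (Fin.natAdd k i))) := funext key2
    have hC : (fun i => w (Θ ρ (Fin.natAdd k (τ (Fin.natAdd l i)))))
        = fun i => v (ρ (Fin.natAdd (k+l) i)) := funext key3
    rw [hA, hB', hC, ← mul_assoc]
    congr 1
    have hsg : Equiv.Perm.sign (Θ ρ) = Equiv.Perm.sign ρ * Equiv.Perm.sign τ := by
      have : Θ ρ = (Equiv.permCongr ec ρ) * (extPermR k (l+m) τ)⁻¹ := rfl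
      rw [this, Equiv.Perm.sign_mul, Equiv.Perm.sign_permCongr, Equiv.Perm.sign_inv,
        sign_extPermR]
    rw [hsg]
    push_cast [Units.val_mul]
    rw [mul_assoc, sgnR_mul_self, mul_one]
  rw [Finset.sum_congr rfl (fun τ _ => inner τ), Finset.sum_const, Finset.card_univ,
    Fintype.card_perm, Fintype.card_fin, ← Nat.cast_smul_eq_nsmul ℝ, smul_smul]
  congr 1
  have h1 : ((l+m).factorial : ℝ) ≠ 0 := Nat.cast_ne_zero.2 (Nat.factorial_ne_zero _)
  have h2 : (k.factorial : ℝ) ≠ 0 := Nat.cast_ne_zero.2 (Nat.factorial_ne_zero _)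
  have h3 : (l.factorial : ℝ) ≠ 0 := Nat.cast_ne_zero.2 (Nat.factorial_ne_zero _)
  have h4 : (m.factorial : ℝ) ≠ 0 := Nat.cast_ne_zero.2 (Nat.factorial_ne_zero _)
  push_cast
  field_simp


/-- The operation `*` on exterior-power endomorphisms is associative,
commutative and `ℝ`-bilinear.  Each occurrence of a `*`-product is characterized by the
predicate `IsStarMul`; commutativity and associativity are stated via the (injective)
coercion into the exterior algebra, which identifies `⋀^(k+l) V` with `⋀^(l+k) V` and
`⋀^((k+l)+m) V` with `⋀^(k+(l+m)) V`. -/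
theorem starMul_assoc_comm_bilinear
    (k l m : ℕ)
    (A A' : Module.End ℝ (⋀[ℝ]^k V)) (B B' : Module.End ℝ (⋀[ℝ]^l V))
    (Cm : Module.End ℝ (⋀[ℝ]^m V)) (c : ℝ)
    (AB : Module.End ℝ (⋀[ℝ]^(k+l) V)) (hAB : IsStarMul k l A B AB)
    (BA : Module.End ℝ (⋀[ℝ]^(l+k) V)) (hBA : IsStarMul l k B A BA)
    (BC : Module.End ℝ (⋀[ℝ]^(l+m) V)) (hBC : IsStarMul l m B Cm BC)
    (ABC₁ : Module.End ℝ (⋀[ℝ]^(k+l+m) V)) (hABC₁ : IsStarMul (k+l) m AB Cm ABC₁)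
    (ABC₂ : Module.End ℝ (⋀[ℝ]^(k+(l+m)) V)) (hABC₂ : IsStarMul k (l+m) A BC ABC₂)
    (A'B : Module.End ℝ (⋀[ℝ]^(k+l) V)) (hA'B : IsStarMul k l A' B A'B)
    (SAB : Module.End ℝ (⋀[ℝ]^(k+l) V)) (hSAB : IsStarMul k l (A + A') B SAB)
    (cAB : Module.End ℝ (⋀[ℝ]^(k+l) V)) (hcAB : IsStarMul k l (c • A) B cAB)
    (AB' : Module.End ℝ (⋀[ℝ]^(k+l) V)) (hAB' : IsStarMul k l A B' AB')
    (SAB' : Module.End ℝ (⋀[ℝ]^(k+l) V)) (hSAB' : IsStarMul k l A (B + B') SAB')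
    (cAB' : Module.End ℝ (⋀[ℝ]^(k+l) V)) (hcAB' : IsStarMul k l A (c • B) cAB') :
    -- commutativity: A * B = B * A
    (∀ (ξ : ⋀[ℝ]^(k+l) V) (η : ⋀[ℝ]^(l+k) V),
      (ξ : ExteriorAlgebra ℝ V) = (η : ExteriorAlgebra ℝ V) →
        (AB ξ : ExteriorAlgebra ℝ V) = (BA η : ExteriorAlgebra ℝ V)) ∧
    -- associativity: (A * B) * C = A * (B * C)
    (∀ (ξ : ⋀[ℝ]^(k+l+m) V) (η : ⋀[ℝ]^(k+(l+m)) V),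
      (ξ : ExteriorAlgebra ℝ V) = (η : ExteriorAlgebra ℝ V) →
        (ABC₁ ξ : ExteriorAlgebra ℝ V) = (ABC₂ η : ExteriorAlgebra ℝ V)) ∧
    -- ℝ-bilinearity
    SAB = AB + A'B ∧ cAB = c • AB ∧ SAB' = AB + AB' ∧ cAB' = c • AB := by
  refine ⟨?_, ?_, ?_, ?_, ?_, ?_⟩
  · -- commutativity
    intro ξ η hcoe
    have hsub : (⋀[ℝ]^(k+l) V) = (⋀[ℝ]^(l+k) V) := by rw [Nat.add_comm]
    have key : ∀ ζ : ⋀[ℝ]^(k+l) V,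
        (AB ζ : ExteriorAlgebra ℝ V) = (BA (LinearEquiv.ofEq _ _ hsub ζ) : ExteriorAlgebra ℝ V) := by
      refine powInduction ?_ ?_ ?_ ?_
      · intro v
        have hofeq : (LinearEquiv.ofEq _ _ hsub) (iMultiP (k+l) v)
            = iMultiP (l+k) (fun j => v (Fin.cast (Nat.add_comm l k) j)) := by
          apply Subtype.ext
          rw [LinearEquiv.coe_ofEq_apply, iMultiP_coe, iMultiP_coe]
          exact (ιMulti_cast (Nat.add_comm l k) v).symm
        rw [hofeq]
        exact comm_key k l A B AB hAB BA hBA v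
      · simp
      · intro a b ha hb; simp [map_add, ha, hb]
      · intro c' a ha; simp [map_smul, ha]
    have hη : η = (LinearEquiv.ofEq _ _ hsub) ξ :=
      Subtype.ext (by rw [LinearEquiv.coe_ofEq_apply]; exact hcoe.symm)
    rw [hη]
    exact key ξ
  · -- associativity
    intro ξ η hcoe
    have hsub : (⋀[ℝ]^(k+l+m) V) = (⋀[ℝ]^(k+(l+m)) V) := by rw [Nat.add_assoc]
    have key : ∀ ζ : ⋀[ℝ]^(k+l+m) V,
        (ABC₁ ζ : ExteriorAlgebra ℝ V)
          = (ABC₂ (LinearEquiv.ofEq _ _ hsub ζ) : ExteriorAlgebra ℝ V) := by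
      refine powInduction ?_ ?_ ?_ ?_
      · intro v
        have hofeq : (LinearEquiv.ofEq _ _ hsub) (iMultiP (k+l+m) v)
            = iMultiP (k+(l+m)) (fun j => v (Fin.cast (Nat.add_assoc k l m).symm j)) := by
          apply Subtype.ext
          rw [LinearEquiv.coe_ofEq_apply, iMultiP_coe, iMultiP_coe]
          exact (ιMulti_cast (Nat.add_assoc k l m).symm v).symm
        rw [hofeq, assoc1 k l m A B Cm AB hAB ABC₁ hABC₁ v]
        exact (assoc2 k l m A B Cm BC hBC ABC₂ hABC₂ v).symm
      · simp
      · intro a b ha hb; simp [map_add, ha, hb]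
      · intro c' a ha; simp [map_smul, ha]
    have hη : η = (LinearEquiv.ofEq _ _ hsub) ξ :=
      Subtype.ext (by rw [LinearEquiv.coe_ofEq_apply]; exact hcoe.symm)
    rw [hη]
    exact key ξ
  · -- SAB = AB + A'B
    apply end_ext
    intro v
    have h1 := hSAB v
    simp only [LinearMap.add_apply, Submodule.coe_add] at h1 ⊢
    rw [hAB v, hA'B v, h1, ← smul_add, ← Finset.sum_add_distrib]
    congr 1
    apply Finset.sum_congr rfl
    intro σ _
    simp only [LinearMap.add_apply, Submodule.coe_add, add_mul, smul_add]
  · -- cAB = c • AB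
    apply end_ext
    intro v
    have h1 := hcAB v
    simp only [LinearMap.smul_apply, SetLike.val_smul] at h1 ⊢
    rw [hAB v, h1, smul_comm]
    congr 1
    rw [Finset.smul_sum]
    apply Finset.sum_congr rfl
    intro σ _
    simp only [LinearMap.smul_apply, SetLike.val_smul, smul_mul_assoc]
    rw [smul_comm]
  · -- SAB' = AB + AB'
    apply end_ext
    intro v
    have h1 := hSAB' v
    simp only [LinearMap.add_apply, Submodule.coe_add] at h1 ⊢
    rw [hAB v, hAB' v, h1, ← smul_add, ← Finset.sum_add_distrib]
    congr 1
    apply Finset.sum_congr rfl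
    intro σ _
    simp only [LinearMap.add_apply, Submodule.coe_add, mul_add, smul_add]
  · -- cAB' = c • AB
    apply end_ext
    intro v
    have h1 := hcAB' v
    simp only [LinearMap.smul_apply, SetLike.val_smul] at h1 ⊢
    rw [hAB v, h1, smul_comm]
    congr 1
    rw [Finset.smul_sum]
    apply Finset.sum_congr rfl
    intro σ _
    simp only [LinearMap.smul_apply, SetLike.val_smul, mul_smul_comm]
    rw [smul_comm]
end

section
/- Let (V, g) be an n-dimensional scalar product space, let θ ∈ O(V, g), and let C be an algebraic curvature tensor on V that is θ-even or θ-odd. Then for all 1 ≤ k ≤ ⌊n/2⌋, the kth Pontryagin form of C is fixed by the map induced by θ: ∧^{4k}θ*(ϖ_k(C)) = ϖ_k(C), where ∧^{4k}θ* is the map induced on ∧^{4k}V* by θ. -/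
open ExteriorAlgebra

variable {V : Type} [AddCommGroup V] [Module ℝ V]

section AuxPf

lemma aux_sum_apply {m : ℕ} {ι : Type*} (s : Finset ι) (f : ι → (V [⋀^Fin m]→ₗ[ℝ] ℝ))
    (v : Fin m → V) : (∑ i ∈ s, f i) v = ∑ i ∈ s, f i v := by
  induction s using Finset.cons_induction with
  | empty => simp
  | cons a s ha ih => rw [Finset.sum_cons, Finset.sum_cons, AlternatingMap.add_apply, ih]

lemma aux_altCast_apply {a b : ℕ} (h : a = b) (ω : V [⋀^Fin a]→ₗ[ℝ] ℝ) (v : Fin b → V) :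
    altCast h ω v = ω (v ∘ finCongr h) := rfl

lemma aux_altCast_smul {a b : ℕ} (h : a = b) (c : ℝ) (ω : V [⋀^Fin a]→ₗ[ℝ] ℝ) :
    altCast h (c • ω) = c • altCast h ω := rfl

lemma aux_altCast_sum {a b : ℕ} (h : a = b) {ι : Type*} (s : Finset ι)
    (f : ι → (V [⋀^Fin a]→ₗ[ℝ] ℝ)) :
    altCast h (∑ i ∈ s, f i) = ∑ i ∈ s, altCast h (f i) := by
  ext v
  rw [aux_sum_apply, aux_altCast_apply, aux_sum_apply]
  exact Finset.sum_congr rfl fun i _ => rfl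

lemma aux_smul_compLinearMap {m : ℕ} (c : ℝ) (f : V [⋀^Fin m]→ₗ[ℝ] ℝ) (θ : V →ₗ[ℝ] V) :
    (c • f).compLinearMap θ = c • f.compLinearMap θ := rfl

lemma aux_sum_compLinearMap {m : ℕ} {ι : Type*} (s : Finset ι)
    (f : ι → (V [⋀^Fin m]→ₗ[ℝ] ℝ)) (θ : V →ₗ[ℝ] V) :
    (∑ i ∈ s, f i).compLinearMap θ = ∑ i ∈ s, (f i).compLinearMap θ := by
  ext v
  rw [aux_sum_apply, AlternatingMap.compLinearMap_apply, aux_sum_apply]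
  exact Finset.sum_congr rfl fun i _ => rfl

lemma aux_altCast_comp {a b : ℕ} (h : a = b) (ω : V [⋀^Fin a]→ₗ[ℝ] ℝ) (θ : V →ₗ[ℝ] V) :
    (altCast h ω).compLinearMap θ = altCast h (ω.compLinearMap θ) := rfl

lemma aux_altWedge_zero_left {k l : ℕ} (β : V [⋀^Fin l]→ₗ[ℝ] ℝ) :
    altWedge (0 : V [⋀^Fin k]→ₗ[ℝ] ℝ) β = 0 := by
  unfold altWedge
  rw [← AlternatingMap.domCoprod'_apply, TensorProduct.zero_tmul, map_zero,
    LinearMap.compAlternatingMap_zero, AlternatingMap.domDomCongr_zero]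

lemma aux_altWedge_add_left {k l : ℕ} (α₁ α₂ : V [⋀^Fin k]→ₗ[ℝ] ℝ) (β : V [⋀^Fin l]→ₗ[ℝ] ℝ) :
    altWedge (α₁ + α₂) β = altWedge α₁ β + altWedge α₂ β := by
  unfold altWedge
  rw [← AlternatingMap.domCoprod'_apply, ← AlternatingMap.domCoprod'_apply,
    ← AlternatingMap.domCoprod'_apply, TensorProduct.add_tmul, map_add,
    LinearMap.compAlternatingMap_add, AlternatingMap.domDomCongr_add]

lemma aux_altWedge_smul_left {k l : ℕ} (c : ℝ) (α : V [⋀^Fin k]→ₗ[ℝ] ℝ)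
    (β : V [⋀^Fin l]→ₗ[ℝ] ℝ) :
    altWedge (c • α) β = c • altWedge α β := by
  unfold altWedge
  rw [← AlternatingMap.domCoprod'_apply, ← AlternatingMap.domCoprod'_apply,
    ← TensorProduct.smul_tmul', map_smul, LinearMap.compAlternatingMap_smul,
    AlternatingMap.domDomCongr_smul]

lemma aux_altWedge_zero_right {k l : ℕ} (α : V [⋀^Fin k]→ₗ[ℝ] ℝ) :
    altWedge α (0 : V [⋀^Fin l]→ₗ[ℝ] ℝ) = 0 := by
  unfold altWedge
  rw [← AlternatingMap.domCoprod'_apply, TensorProduct.tmul_zero, map_zero,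
    LinearMap.compAlternatingMap_zero, AlternatingMap.domDomCongr_zero]

lemma aux_altWedge_add_right {k l : ℕ} (α : V [⋀^Fin k]→ₗ[ℝ] ℝ)
    (β₁ β₂ : V [⋀^Fin l]→ₗ[ℝ] ℝ) :
    altWedge α (β₁ + β₂) = altWedge α β₁ + altWedge α β₂ := by
  unfold altWedge
  rw [← AlternatingMap.domCoprod'_apply, ← AlternatingMap.domCoprod'_apply,
    ← AlternatingMap.domCoprod'_apply, TensorProduct.tmul_add, map_add,
    LinearMap.compAlternatingMap_add, AlternatingMap.domDomCongr_add]

lemma aux_altWedge_smul_right {k l : ℕ} (c : ℝ) (α : V [⋀^Fin k]→ₗ[ℝ] ℝ)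
    (β : V [⋀^Fin l]→ₗ[ℝ] ℝ) :
    altWedge α (c • β) = c • altWedge α β := by
  unfold altWedge
  rw [← AlternatingMap.domCoprod'_apply, ← AlternatingMap.domCoprod'_apply,
    TensorProduct.tmul_smul, map_smul, LinearMap.compAlternatingMap_smul,
    AlternatingMap.domDomCongr_smul]

lemma aux_altWedge_sum_left {k l : ℕ} {ι : Type*} (s : Finset ι)
    (f : ι → (V [⋀^Fin k]→ₗ[ℝ] ℝ)) (β : V [⋀^Fin l]→ₗ[ℝ] ℝ) :
    altWedge (∑ i ∈ s, f i) β = ∑ i ∈ s, altWedge (f i) β := by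
  induction s using Finset.cons_induction with
  | empty => simpa using aux_altWedge_zero_left β
  | cons a s ha ih => rw [Finset.sum_cons, Finset.sum_cons, aux_altWedge_add_left, ih]

lemma aux_altWedge_sum_right {k l : ℕ} {ι : Type*} (s : Finset ι)
    (α : V [⋀^Fin k]→ₗ[ℝ] ℝ) (f : ι → (V [⋀^Fin l]→ₗ[ℝ] ℝ)) :
    altWedge α (∑ i ∈ s, f i) = ∑ i ∈ s, altWedge α (f i) := by
  induction s using Finset.cons_induction with
  | empty => simpa using aux_altWedge_zero_right α
  | cons a s ha ih => rw [Finset.sum_cons, Finset.sum_cons, aux_altWedge_add_right, ih]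

lemma aux_domCoprod_comp {ka la : ℕ} (α : V [⋀^Fin ka]→ₗ[ℝ] ℝ) (β : V [⋀^Fin la]→ₗ[ℝ] ℝ)
    (θ : V →ₗ[ℝ] V) (v : Fin ka ⊕ Fin la → V) :
    (α.domCoprod β) (fun i => θ (v i))
      = ((α.compLinearMap θ).domCoprod (β.compLinearMap θ)) v := by
  rw [AlternatingMap.domCoprod_apply, AlternatingMap.domCoprod_apply,
    MultilinearMap.sum_apply, MultilinearMap.sum_apply]
  refine Finset.sum_congr rfl fun σ _ => ?_
  refine Quotient.inductionOn' σ fun σ => ?_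
  rfl

lemma aux_altWedge_comp {ka la : ℕ} (α : V [⋀^Fin ka]→ₗ[ℝ] ℝ) (β : V [⋀^Fin la]→ₗ[ℝ] ℝ)
    (θ : V →ₗ[ℝ] V) :
    (altWedge α β).compLinearMap θ = altWedge (α.compLinearMap θ) (β.compLinearMap θ) := by
  ext v
  show (TensorProduct.lid ℝ ℝ) ((α.domCoprod β) (fun i => θ (v (finSumFinEquiv i))))
    = (TensorProduct.lid ℝ ℝ)
      (((α.compLinearMap θ).domCoprod (β.compLinearMap θ)) (fun i => v (finSumFinEquiv i)))
  rw [aux_domCoprod_comp α β θ (fun i => v (finSumFinEquiv i))]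

lemma aux_const_comp (θ : V →ₗ[ℝ] V) :
    (AlternatingMap.constOfIsEmpty ℝ V (Fin 0) (1:ℝ)).compLinearMap θ
      = AlternatingMap.constOfIsEmpty ℝ V (Fin 0) (1:ℝ) := by
  ext v
  rfl

lemma aux_wedgeList_comp (θ : V →ₗ[ℝ] V) :
    ∀ (m : ℕ) (ω : Fin m → (V [⋀^Fin 2]→ₗ[ℝ] ℝ)),
    (wedgeList m ω).compLinearMap θ = wedgeList m (fun a => (ω a).compLinearMap θ)
  | 0, ω => by
    show (altCast _ (AlternatingMap.constOfIsEmpty ℝ V (Fin 0) 1)).compLinearMap θ = _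
    rw [aux_altCast_comp, aux_const_comp]
    rfl
  | (m+1), ω => by
    show (altCast _ (altWedge (wedgeList m fun a => ω a.castSucc)
        (ω (Fin.last m)))).compLinearMap θ = _
    rw [aux_altCast_comp, aux_altWedge_comp, aux_wedgeList_comp θ m]
    rfl

lemma aux_wedgeList_expand {κ : Type} [Fintype κ] :
    ∀ (m : ℕ) (c : Fin m → κ → ℝ) (F : κ → (V [⋀^Fin 2]→ₗ[ℝ] ℝ)),
    wedgeList m (fun a => ∑ t : κ, c a t • F t)
      = ∑ T : Fin m → κ, (∏ a, c a (T a)) • wedgeList m (fun a => F (T a))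
  | 0, c, F => by
    have h1 : ∀ ω : Fin 0 → (V [⋀^Fin 2]→ₗ[ℝ] ℝ), wedgeList 0 ω
        = altCast (by ring) (AlternatingMap.constOfIsEmpty ℝ V (Fin 0) (1:ℝ)) := fun _ => rfl
    rw [h1]
    rw [Finset.sum_eq_single_of_mem (fun i : Fin 0 => i.elim0) (Finset.mem_univ _)
      (fun T _ hT => absurd (Subsingleton.elim T _) hT)]
    rw [h1]
    simp
  | (m+1), c, F => by
    show altCast _ (altWedge (wedgeList m fun a => ∑ t : κ, c a.castSucc t • F t)
        (∑ t : κ, c (Fin.last m) t • F t)) = _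
    rw [aux_wedgeList_expand m (fun a => c a.castSucc) F]
    rw [aux_altWedge_sum_left]
    rw [show (∑ T' : Fin m → κ, altWedge ((∏ a, c a.castSucc (T' a)) •
          wedgeList m fun a => F (T' a)) (∑ t : κ, c (Fin.last m) t • F t))
        = ∑ T' : Fin m → κ, ∑ t : κ, ((∏ a, c a.castSucc (T' a)) * c (Fin.last m) t) •
            altWedge (wedgeList m fun a => F (T' a)) (F t) from
      Finset.sum_congr rfl fun T' _ => by
        rw [aux_altWedge_smul_left, aux_altWedge_sum_right, Finset.smul_sum]
        exact Finset.sum_congr rfl fun t _ => by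
          rw [aux_altWedge_smul_right, smul_smul]]
    rw [aux_altCast_sum]
    -- reindex the RHS over `Fin (m+1) → κ` via snoc
    rw [← Equiv.sum_comp (Fin.snocEquiv (fun _ => κ))
      (fun T => (∏ a, c a (T a)) • wedgeList (m+1) (fun a => F (T a)))]
    rw [Fintype.sum_prod_type]
    rw [Finset.sum_comm]
    refine Finset.sum_congr rfl fun T' _ => ?_
    rw [aux_altCast_sum]
    refine Finset.sum_congr rfl fun t _ => ?_
    set S : Fin (m+1) → κ := Fin.snocEquiv (fun _ => κ) (t, T') with hS
    have hcast : ∀ a : Fin m, S a.castSucc = T' a := fun a => by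
      simp [hS, Fin.snocEquiv]
    have hlast : S (Fin.last m) = t := by simp [hS, Fin.snocEquiv]
    have hprod : (∏ a : Fin (m+1), c a (S a))
        = (∏ a : Fin m, c a.castSucc (T' a)) * c (Fin.last m) t := by
      rw [Fin.prod_univ_castSucc]
      simp [hcast, hlast]
    have hw : wedgeList (m+1) (fun a => F (S a))
        = altCast (by ring) (altWedge (wedgeList m fun a => F (T' a)) (F t)) := by
      show altCast _ (altWedge (wedgeList m fun a => F (S a.castSucc))
        (F (S (Fin.last m)))) = _
      rw [hlast]
      have hfe : (fun a : Fin m => F (S a.castSucc)) = fun a => F (T' a) :=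
        funext fun a => by rw [hcast]
      rw [hfe]
    rw [hprod, hw, aux_altCast_smul]

noncomputable def sgn2 {m n : ℕ} (P Q : Fin m → Fin n) : ℝ :=
  ∑ τ : Equiv.Perm (Fin m), ((Equiv.Perm.sign τ : ℤ) : ℝ) * (if Q = P ∘ τ then 1 else 0)

lemma aux_sgn2_of_not_injective {m n : ℕ} {P Q : Fin m → Fin n}
    (hP : ¬ Function.Injective P) : sgn2 P Q = 0 := by
  obtain ⟨a1, a2, hval, hne⟩ := Function.not_injective_iff.mp hP
  unfold sgn2
  refine Finset.sum_ninvolution (fun τ => Equiv.swap a1 a2 * τ) ?_ ?_ (fun _ => Finset.mem_univ _)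
    ?_
  · intro τ
    have hPs : P ∘ (Equiv.swap a1 a2 * τ) = P ∘ τ := by
      funext x
      exact Equiv.apply_swap_eq_self hval _
    rw [hPs]
    have : Equiv.Perm.sign (Equiv.swap a1 a2 * τ) = - Equiv.Perm.sign τ := by
      rw [Equiv.Perm.sign_mul, Equiv.Perm.sign_swap hne, neg_one_mul]
    rw [this]
    push_cast
    ring
  · intro τ _ heq
    apply hne
    have h1 : Equiv.swap a1 a2 = 1 := by
      have h2 := congrArg (· * τ⁻¹) heq
      simpa [mul_assoc] using h2
    exact (Equiv.swap_eq_one_iff).mp h1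
  · intro τ
    show Equiv.swap a1 a2 * (Equiv.swap a1 a2 * τ) = τ
    rw [← mul_assoc, Equiv.swap_mul_self, one_mul]

lemma aux_sgn2_unique {m n : ℕ} {P Q : Fin m → Fin n} (hP : Function.Injective P)
    (τ : Equiv.Perm (Fin m)) (hτ : Q = P ∘ τ) :
    sgn2 P Q = ((Equiv.Perm.sign τ : ℤ) : ℝ) := by
  unfold sgn2
  rw [Finset.sum_eq_single τ]
  · rw [if_pos hτ, mul_one]
  · intro τ' _ hne
    rw [if_neg, mul_zero]
    intro hc
    apply hne
    apply Equiv.ext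
    intro x
    exact (hP (by
      have := congrFun (hτ.symm.trans hc) x
      simpa using this)).symm
  · intro h; exact absurd (Finset.mem_univ τ) h

lemma aux_sgnIJ_eq_sgn2 {m n : ℕ} (P Q : Fin m → Fin n) : sgnIJ P Q = sgn2 P Q := by
  by_cases hP : Function.Injective P
  · by_cases hex : ∃ τ : Equiv.Perm (Fin m), Q = P ∘ τ
    · have h : Function.Injective P ∧ ∃ τ : Equiv.Perm (Fin m), Q = P ∘ τ := ⟨hP, hex⟩
      rw [sgnIJ, dif_pos h, aux_sgn2_unique hP h.2.choose h.2.choose_spec]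
    · rw [sgnIJ, dif_neg (fun h => hex h.2)]
      unfold sgn2
      rw [Finset.sum_eq_zero]
      intro τ _
      rw [if_neg (fun hc => hex ⟨τ, hc⟩), mul_zero]
  · rw [sgnIJ, dif_neg (fun h => hP h.1), aux_sgn2_of_not_injective hP]

lemma aux_sgn2_contract {m n : ℕ} (M N : Matrix (Fin n) (Fin n) ℝ)
    (hNM : ∀ q p, (∑ i, N q i * M i p) = if q = p then (1:ℝ) else 0)
    (P Q : Fin m → Fin n) :
    ∑ I : Fin m → Fin n, ∑ J : Fin m → Fin n,
      sgn2 I J * ∏ a, (M (I a) (P a) * N (Q a) (J a)) = sgn2 P Q := by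
  classical
  have step1 : ∀ I : Fin m → Fin n,
      (∑ J : Fin m → Fin n, sgn2 I J * ∏ a, (M (I a) (P a) * N (Q a) (J a)))
      = ∑ τ : Equiv.Perm (Fin m), ((Equiv.Perm.sign τ : ℤ) : ℝ) *
          ∏ a, (M (I a) (P a) * N (Q a) (I (τ a))) := by
    intro I
    unfold sgn2
    simp only [Finset.sum_mul]
    rw [Finset.sum_comm]
    refine Finset.sum_congr rfl fun τ _ => ?_
    rw [Finset.sum_eq_single (I ∘ τ)]
    · rw [if_pos rfl, mul_one]; rfl
    · intro J _ hne
      rw [if_neg (fun hc => hne hc), mul_zero, zero_mul]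
    · intro h; exact absurd (Finset.mem_univ _) h
  simp only [step1]
  rw [Finset.sum_comm]
  unfold sgn2
  refine Finset.sum_congr rfl fun τ _ => ?_
  have hsplit : ∀ I : Fin m → Fin n,
      (∏ a, (M (I a) (P a) * N (Q a) (I (τ a))))
        = ∏ a, (M (I a) (P a) * N (Q (τ⁻¹ a)) (I a)) := by
    intro I
    rw [Finset.prod_mul_distrib, Finset.prod_mul_distrib]
    congr 1
    rw [← Equiv.prod_comp τ (fun b => N (Q (τ⁻¹ b)) (I b))]
    refine Finset.prod_congr rfl fun a _ => ?_
    rw [Equiv.Perm.inv_def, Equiv.symm_apply_apply]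
  simp only [hsplit]
  rw [← Finset.mul_sum]
  congr 1
  have hpi : (∑ I : Fin m → Fin n, ∏ a, (M (I a) (P a) * N (Q (τ⁻¹ a)) (I a)))
      = ∏ a, (∑ i, (M i (P a) * N (Q (τ⁻¹ a)) i)) := by
    rw [← Fintype.piFinset_univ,
      ← Finset.prod_univ_sum (fun _ => (Finset.univ : Finset (Fin n)))
        (fun a z => M z (P a) * N (Q (τ⁻¹ a)) z)]
  rw [hpi]
  have hentry : ∀ a, (∑ i, (M i (P a) * N (Q (τ⁻¹ a)) i))
      = if Q (τ⁻¹ a) = P a then (1:ℝ) else 0 := by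
    intro a
    rw [← hNM (Q (τ⁻¹ a)) (P a)]
    exact Finset.sum_congr rfl fun i _ => mul_comm _ _
  simp only [hentry]
  rw [Fintype.prod_boole]
  have hiff : (∀ a, Q (τ⁻¹ a) = P a) ↔ Q = P ∘ τ := by
    constructor
    · intro h
      funext b
      have := h (τ b)
      simpa using this
    · intro h a
      rw [h]
      simp
  by_cases hQP : Q = P ∘ τ
  · rw [if_pos (hiff.mpr hQP), if_pos hQP]
  · rw [if_neg (fun hc => hQP (hiff.mp hc)), if_neg hQP]

end AuxPf

set_option maxHeartbeats 2000000

/-- If an algebraic curvature tensor `C` on an `n`-dimensional scalar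
product space is `θ`-even or `θ`-odd for an isometry `θ`, then for `1 ≤ k ≤ ⌊n/2⌋`
the `k`-th Pontryagin form of `C` is fixed by the pullback along `θ`. -/
theorem pontryaginForm_fixed_of_even_or_odd
    {n : ℕ} [FiniteDimensional ℝ V]
    (g : LinearMap.BilinForm ℝ V)
    (hgsymm : ∀ x y, g x y = g y x)
    (hgnd : ∀ x : V, (∀ y, g x y = 0) → x = 0)
    (e : Module.Basis (Fin n) ℝ V)
    (C : V → V → V → V → ℝ) (hC : IsACT C)
    (Ω : Fin n → Fin n → (V [⋀^Fin 2]→ₗ[ℝ] ℝ))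
    (hΩ : IsCurvMatrix g C (fun i => e i) Ω)
    (θ : V →ₗ[ℝ] V) (hθ : ∀ x y, g (θ x) (θ y) = g x y)
    (heo : (∀ u v x y : V, C (θ u) (θ v) (θ x) (θ y) = C u v x y) ∨
           (∀ u v x y : V, C (θ u) (θ v) (θ x) (θ y) = -C u v x y))
    (k : ℕ) (hk1 : 1 ≤ k) (hk2 : 2*k ≤ n) :
    (pontryaginForm n k Ω).compLinearMap θ = pontryaginForm n k Ω := by
  classical
  obtain ⟨ε, hε1, hεC⟩ : ∃ ε : ℝ, (ε = 1 ∨ ε = -1) ∧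
      ∀ u v x y : V, C (θ u) (θ v) (θ x) (θ y) = ε * C u v x y := by
    rcases heo with h | h
    · exact ⟨1, Or.inl rfl, fun u v x y => by rw [h]; ring⟩
    · exact ⟨-1, Or.inr rfl, fun u v x y => by rw [h]; ring⟩
  obtain ⟨⟨hml1, hml2, hml3, hml4⟩, hanti1, hanti2, hpair, hbianchi⟩ := hC
  -- θ is bijective
  have hθinj : Function.Injective θ := by
    intro a b hab
    have h0 : θ (a - b) = 0 := by rw [map_sub, hab, sub_self]
    have h1 : a - b = 0 := by
      apply hgnd
      intro y
      have h2 := hθ (a - b) y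
      rw [h0] at h2
      rw [← h2]
      simp
    exact sub_eq_zero.mp h1
  have hθsurj : Function.Surjective θ := LinearMap.injective_iff_surjective.mp hθinj
  let θe : V ≃ₗ[ℝ] V := LinearEquiv.ofBijective θ ⟨hθinj, hθsurj⟩
  have hθθi : ∀ w : V, θ (θe.symm w) = w := fun w => θe.apply_symm_apply w
  -- Gram matrix
  set G : Matrix (Fin n) (Fin n) ℝ := Matrix.of fun i j => g (e i) (e j) with hGdef
  have hGe : ∀ i j, G i j = g (e i) (e j) := fun _ _ => rfl
  have hgsum : ∀ (f f' : Fin n → ℝ),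
      g (∑ p, f p • e p) (∑ q, f' q • e q) = ∑ p, ∑ q, f p * (f' q * g (e p) (e q)) := by
    intro f f'
    rw [map_sum g, LinearMap.sum_apply]
    refine Finset.sum_congr rfl fun p _ => ?_
    rw [map_smul g, LinearMap.smul_apply, map_sum, smul_eq_mul, Finset.mul_sum]
    refine Finset.sum_congr rfl fun q _ => ?_
    rw [map_smul, smul_eq_mul]
  have hGunit : IsUnit G := by
    rw [← Matrix.vecMul_injective_iff_isUnit]
    have hker : ∀ u : Fin n → ℝ, Matrix.vecMul u G = 0 → u = 0 := by
      intro u hu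
      have hx : ∀ y : V, g (∑ i, u i • e i) y = 0 := by
        intro y
        conv_lhs => rw [← Module.Basis.sum_repr e y]
        rw [hgsum, Finset.sum_comm]
        apply Finset.sum_eq_zero
        intro q _
        have h4 : Matrix.vecMul u G q = ∑ p, u p * G p q := by
          simp [Matrix.vecMul, dotProduct]
        have h3 : ∑ p, u p * (e.repr y q * g (e p) (e q))
            = e.repr y q * Matrix.vecMul u G q := by
          rw [h4, Finset.mul_sum]
          refine Finset.sum_congr rfl fun p _ => ?_
          rw [hGe]
          ring
        rw [h3, hu]
        simp
      have h5 : (∑ i, u i • e i) = (0 : V) := hgnd _ hx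
      have h6 : ⇑(e.repr (∑ i, u i • e i)) = u := e.repr_sum_self u
      rw [h5] at h6
      rw [← h6]
      simp
    intro v w hvw
    have hvw' : Matrix.vecMul v G = Matrix.vecMul w G := hvw
    have h7 : Matrix.vecMul (v - w) G = 0 := by
      rw [Matrix.sub_vecMul, hvw', sub_self]
    exact sub_eq_zero.mp (hker _ h7)
  have hGdet : IsUnit G.det := (Matrix.isUnit_iff_isUnit_det G).mp hGunit
  set H : Matrix (Fin n) (Fin n) ℝ := G⁻¹ with hHdef
  have hGH : G * H = 1 := Matrix.mul_nonsing_inv G hGdet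
  -- matrix of θ⁻¹
  set A : Matrix (Fin n) (Fin n) ℝ := Matrix.of fun i p => e.repr (θe.symm (e i)) p with hAdef
  have hAe : ∀ i, θe.symm (e i) = ∑ p, A i p • e p := fun i => (e.sum_repr (θe.symm (e i))).symm
  have hAGA : A * G * A.transpose = G := by
    ext i m'
    have h1 : (A * G * A.transpose) i m' = ∑ q, (∑ p, A i p * G p q) * A m' q := by
      simp [Matrix.mul_apply, Matrix.transpose_apply]
    have h2 : G i m' = g (θe.symm (e i)) (θe.symm (e m')) := by
      rw [hGe, ← hθ (θe.symm (e i)) (θe.symm (e m')), hθθi, hθθi]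
    rw [h1, h2, hAe i, hAe m', hgsum, Finset.sum_comm]
    refine Finset.sum_congr rfl fun q _ => ?_
    rw [Finset.sum_mul]
    refine Finset.sum_congr rfl fun p _ => ?_
    rw [hGe]
    ring
  have hGd0 : G.det ≠ 0 := hGdet.ne_zero
  have hAdet : IsUnit A.det := by
    have h1 := congrArg Matrix.det hAGA
    rw [Matrix.det_mul, Matrix.det_mul, Matrix.det_transpose] at h1
    rw [isUnit_iff_ne_zero]
    intro h0
    rw [h0, zero_mul, zero_mul] at h1
    exact hGd0 h1.symm
  have hAunit : IsUnit A := (Matrix.isUnit_iff_isUnit_det A).mpr hAdet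
  set B : Matrix (Fin n) (Fin n) ℝ := G * A.transpose * H with hBdef
  have hBA : B * A = 1 := by
    have h5 : A * (B * A) = A * 1 := by
      rw [Matrix.mul_one, hBdef]
      calc A * ((G * A.transpose * H) * A) = ((A * G) * A.transpose) * (H * A) := by
            simp only [Matrix.mul_assoc]
        _ = G * (H * A) := by rw [show (A * G) * A.transpose = G from hAGA]
        _ = (G * H) * A := by rw [← Matrix.mul_assoc]
        _ = A := by rw [hGH, one_mul]
    exact hAunit.mul_left_cancel h5
  have hNM : ∀ q p, (∑ i, B q i * A i p) = if q = p then (1:ℝ) else 0 := by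
    intro q p
    have h1 : (B * A) q p = (1 : Matrix (Fin n) (Fin n) ℝ) q p := by rw [hBA]
    rw [Matrix.mul_apply] at h1
    rw [h1, Matrix.one_apply]
  -- multilinearity of C in slots 3 and 4
  have h3zero : ∀ u v z : V, C u v 0 z = 0 := by
    intro u v z
    have h := hml3 1 u v 0 0 z
    simp at h
    linarith
  have h3add : ∀ u v x x' z : V, C u v (x + x') z = C u v x z + C u v x' z := by
    intro u v x x' z
    have h := hml3 1 u v x x' z
    simpa using h
  have h3smul : ∀ (a : ℝ) (u v x z : V), C u v (a • x) z = a * C u v x z := by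
    intro a u v x z
    have h := hml3 a u v x 0 z
    simpa [h3zero] using h
  have h3sum : ∀ (u v z : V) (f : Fin n → ℝ) (w : Fin n → V),
      C u v (∑ p, f p • w p) z = ∑ p, f p * C u v (w p) z := by
    intro u v z f w
    induction (Finset.univ : Finset (Fin n)) using Finset.cons_induction with
    | empty => simpa using h3zero u v z
    | cons a s ha ih => rw [Finset.sum_cons, Finset.sum_cons, h3add, h3smul, ih]
  have h4zero : ∀ u v x : V, C u v x 0 = 0 := by
    intro u v x
    have h := hml4 1 u v x 0 0
    simp at h
    linarith
  have h4add : ∀ u v x y y' : V, C u v x (y + y') = C u v x y + C u v x y' := by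
    intro u v x y y'
    have h := hml4 1 u v x y y'
    simpa using h
  have h4smul : ∀ (a : ℝ) (u v x y : V), C u v x (a • y) = a * C u v x y := by
    intro a u v x y
    have h := hml4 a u v x y 0
    simpa [h4zero] using h
  have h4sum : ∀ (u v x : V) (f : Fin n → ℝ) (w : Fin n → V),
      C u v x (∑ p, f p • w p) = ∑ p, f p * C u v x (w p) := by
    intro u v x f w
    induction (Finset.univ : Finset (Fin n)) using Finset.cons_induction with
    | empty => simpa using h4zero u v x
    | cons a s ha ih => rw [Finset.sum_cons, Finset.sum_cons, h4add, h4smul, ih]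
  -- curvature matrix relations
  have hωG : ∀ x y : V, (Matrix.of fun p q => Ω p q ![x, y]) * G
      = Matrix.of fun i m' => C x y (e i) (e m') := by
    intro x y
    ext i m'
    rw [Matrix.mul_apply]
    exact (hΩ x y i m').symm
  have hωθ : ∀ x y : V, (Matrix.of fun p q => Ω p q ![θ x, θ y])
      = ε • (A * (Matrix.of fun p q => Ω p q ![x, y]) * B) := by
    intro x y
    have hCθ : (Matrix.of fun i m' => C (θ x) (θ y) (e i) (e m'))
        = ε • (A * (Matrix.of fun i m' => C x y (e i) (e m')) * A.transpose) := by
      ext i m'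
      have h1 : C (θ x) (θ y) (e i) (e m')
          = ε * C x y (θe.symm (e i)) (θe.symm (e m')) := by
        calc C (θ x) (θ y) (e i) (e m') = C (e i) (e m') (θ x) (θ y) := hpair _ _ _ _
          _ = C (θ (θe.symm (e i))) (θ (θe.symm (e m'))) (θ x) (θ y) := by
              rw [hθθi, hθθi]
          _ = ε * C (θe.symm (e i)) (θe.symm (e m')) x y := hεC _ _ _ _
          _ = ε * C x y (θe.symm (e i)) (θe.symm (e m')) := by rw [hpair]
      have h2 : C x y (θe.symm (e i)) (θe.symm (e m'))
          = ∑ p, A i p * ∑ q, A m' q * C x y (e p) (e q) := by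
        rw [hAe i, hAe m', h3sum]
        refine Finset.sum_congr rfl fun p _ => ?_
        rw [h4sum]
      have h3 : (ε • (A * (Matrix.of fun i m' => C x y (e i) (e m')) * A.transpose)) i m'
          = ε * ∑ q, (∑ p, A i p * C x y (e p) (e q)) * A m' q := by
        simp [Matrix.smul_apply, Matrix.mul_apply, Matrix.transpose_apply, smul_eq_mul]
      rw [Matrix.of_apply, h1, h2, h3]
      congr 1
      simp only [Finset.mul_sum, Finset.sum_mul]
      rw [Finset.sum_comm]
      exact Finset.sum_congr rfl fun p _ => Finset.sum_congr rfl fun q _ => by ring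
    have h4 : (Matrix.of fun p q => Ω p q ![θ x, θ y])
        = (Matrix.of fun i m' => C (θ x) (θ y) (e i) (e m')) * H := by
      rw [← hωG (θ x) (θ y), Matrix.mul_assoc, hGH, Matrix.mul_one]
    rw [h4, hCθ, ← hωG x y, Matrix.smul_mul]
    congr 1
    show (A * ((Matrix.of fun p q => Ω p q ![x, y]) * G) * A.transpose) * H
      = A * (Matrix.of fun p q => Ω p q ![x, y]) * (G * A.transpose * H)
    simp only [Matrix.mul_assoc]
  have hKeyxy : ∀ (i j : Fin n) (x y : V), Ω i j ![θ x, θ y]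
      = ∑ t : Fin n × Fin n, (ε * A i t.1 * B t.2 j) * Ω t.1 t.2 ![x, y] := by
    intro i j x y
    have h6 : (Matrix.of fun p q => Ω p q ![θ x, θ y]) i j
        = (ε • (A * (Matrix.of fun p q => Ω p q ![x, y]) * B)) i j := by
      rw [hωθ x y]
    rw [show (Matrix.of fun p q => Ω p q ![θ x, θ y]) i j = Ω i j ![θ x, θ y] from rfl] at h6
    rw [h6, Fintype.sum_prod_type]
    simp only [Matrix.smul_apply, Matrix.mul_apply, Matrix.of_apply, smul_eq_mul]
    rw [Finset.mul_sum]
    simp only [Finset.sum_mul, Finset.mul_sum]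
    rw [Finset.sum_comm]
    exact Finset.sum_congr rfl fun p _ => Finset.sum_congr rfl fun q _ => by ring
  have hKey : ∀ i j : Fin n, (Ω i j).compLinearMap θ
      = ∑ t : Fin n × Fin n, (ε * A i t.1 * B t.2 j) • Ω t.1 t.2 := by
    intro i j
    ext v
    have hv2 : (fun a => θ (v a)) = ![θ (v 0), θ (v 1)] := by
      funext a
      fin_cases a <;> rfl
    have hv3 : ![v 0, v 1] = v := by
      funext a
      fin_cases a <;> rfl
    rw [AlternatingMap.compLinearMap_apply]
    rw [show (Ω i j) (fun a => θ (v a)) = Ω i j ![θ (v 0), θ (v 1)] by rw [← hv2]]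
    rw [hKeyxy i j (v 0) (v 1), aux_sum_apply]
    refine Finset.sum_congr rfl fun t _ => ?_
    rw [AlternatingMap.smul_apply, smul_eq_mul]
    congr 1
    rw [hv3]
  -- the per-term expansion
  have hIJ : ∀ I J : Fin (2*k) → Fin n,
      (sgnIJ I J • altCast (show 2*(2*k) = 4*k by ring)
        (wedgeList (2*k) fun a => Ω (I a) (J a))).compLinearMap θ
      = ∑ T : Fin (2*k) → Fin n × Fin n,
          (sgnIJ I J * ∏ a, (ε * A (I a) (T a).1 * B (T a).2 (J a))) •
            altCast (show 2*(2*k) = 4*k by ring)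
              (wedgeList (2*k) fun a => Ω (T a).1 (T a).2) := by
    intro I J
    rw [aux_smul_compLinearMap, aux_altCast_comp, aux_wedgeList_comp]
    rw [show (fun a => (Ω (I a) (J a)).compLinearMap θ)
        = fun a => ∑ t : Fin n × Fin n, (ε * A (I a) t.1 * B t.2 (J a)) • Ω t.1 t.2 from
      funext fun a => hKey (I a) (J a)]
    rw [show wedgeList (2*k) (fun a => ∑ t : Fin n × Fin n,
          (ε * A (I a) t.1 * B t.2 (J a)) • Ω t.1 t.2)
        = ∑ T : Fin (2*k) → Fin n × Fin n,
            (∏ a : Fin (2*k), (ε * A (I a) (T a).1 * B (T a).2 (J a))) •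
              wedgeList (2*k) (fun a => Ω (T a).1 (T a).2) from
      aux_wedgeList_expand (κ := Fin n × Fin n) (2*k) (fun a t => ε * A (I a) t.1 * B t.2 (J a))
        (fun t => Ω t.1 t.2)]
    rw [aux_altCast_sum, Finset.smul_sum]
    refine Finset.sum_congr rfl fun T _ => ?_
    rw [aux_altCast_smul, smul_smul]
  have step2 : (∑ I : Fin (2*k) → Fin n, ∑ J : Fin (2*k) → Fin n,
        sgnIJ I J • altCast (show 2*(2*k) = 4*k by ring)
          (wedgeList (2*k) fun a => Ω (I a) (J a))).compLinearMap θ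
      = ∑ T : Fin (2*k) → Fin n × Fin n,
          (∑ I : Fin (2*k) → Fin n, ∑ J : Fin (2*k) → Fin n,
            sgnIJ I J * ∏ a, (ε * A (I a) (T a).1 * B (T a).2 (J a))) •
            altCast (show 2*(2*k) = 4*k by ring)
              (wedgeList (2*k) fun a => Ω (T a).1 (T a).2) := by
    rw [aux_sum_compLinearMap]
    have h8 : ∀ I : Fin (2*k) → Fin n,
        (∑ J : Fin (2*k) → Fin n, sgnIJ I J • altCast (show 2*(2*k) = 4*k by ring)
          (wedgeList (2*k) fun a => Ω (I a) (J a))).compLinearMap θ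
        = ∑ T : Fin (2*k) → Fin n × Fin n, ∑ J : Fin (2*k) → Fin n,
            (sgnIJ I J * ∏ a, (ε * A (I a) (T a).1 * B (T a).2 (J a))) •
              altCast (show 2*(2*k) = 4*k by ring)
                (wedgeList (2*k) fun a => Ω (T a).1 (T a).2) := by
      intro I
      rw [aux_sum_compLinearMap]
      rw [show (∑ J : Fin (2*k) → Fin n,
          (sgnIJ I J • altCast (show 2*(2*k) = 4*k by ring)
            (wedgeList (2*k) fun a => Ω (I a) (J a))).compLinearMap θ)
          = ∑ J : Fin (2*k) → Fin n, ∑ T : Fin (2*k) → Fin n × Fin n,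
              (sgnIJ I J * ∏ a, (ε * A (I a) (T a).1 * B (T a).2 (J a))) •
                altCast (show 2*(2*k) = 4*k by ring)
                  (wedgeList (2*k) fun a => Ω (T a).1 (T a).2) from
        Finset.sum_congr rfl fun J _ => hIJ I J]
      exact Finset.sum_comm
    simp only [h8]
    rw [Finset.sum_comm]
    refine Finset.sum_congr rfl fun T _ => ?_
    rw [Finset.sum_smul]
    refine Finset.sum_congr rfl fun I _ => ?_
    rw [Finset.sum_smul]
  have step3 : ∀ T : Fin (2*k) → Fin n × Fin n,
      (∑ I : Fin (2*k) → Fin n, ∑ J : Fin (2*k) → Fin n,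
        sgnIJ I J * ∏ a, (ε * A (I a) (T a).1 * B (T a).2 (J a)))
      = sgnIJ (fun a => (T a).1) (fun a => (T a).2) := by
    intro T
    have hprod : ∀ (I J : Fin (2*k) → Fin n),
        (∏ a, (ε * A (I a) (T a).1 * B (T a).2 (J a)))
        = ∏ a, (A (I a) (T a).1 * B (T a).2 (J a)) := by
      intro I J
      have h10 : ∀ a : Fin (2*k), ε * A (I a) (T a).1 * B (T a).2 (J a)
          = ε * (A (I a) (T a).1 * B (T a).2 (J a)) := fun a => by ring
      simp only [h10]
      rw [Finset.prod_mul_distrib, Finset.prod_const, Finset.card_univ, Fintype.card_fin]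
      have hε2 : ε ^ (2*k) = 1 := by
        rcases hε1 with h | h
        · rw [h, one_pow]
        · rw [h, pow_mul]
          norm_num
      rw [hε2, one_mul]
    simp only [hprod, aux_sgnIJ_eq_sgn2]
    exact aux_sgn2_contract A B hNM (fun a => (T a).1) (fun a => (T a).2)
  have step4 : (∑ I : Fin (2*k) → Fin n, ∑ J : Fin (2*k) → Fin n,
        sgnIJ I J • altCast (show 2*(2*k) = 4*k by ring)
          (wedgeList (2*k) fun a => Ω (I a) (J a)))
      = ∑ T : Fin (2*k) → Fin n × Fin n,
          sgnIJ (fun a => (T a).1) (fun a => (T a).2) •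
            altCast (show 2*(2*k) = 4*k by ring)
              (wedgeList (2*k) fun a => Ω (T a).1 (T a).2) := by
    rw [← Fintype.sum_prod_type']
    exact (Fintype.sum_equiv (Equiv.arrowProdEquivProdArrow (Fin (2*k)) (fun _ => Fin n) (fun _ => Fin n))
      _ _ (fun T => rfl)).symm
  have hP : pontryaginForm n k Ω
      = (((2 * Real.pi) ^ (2*k))⁻¹ * (((2*k).factorial : ℕ) : ℝ)⁻¹) •
        ∑ I : Fin (2*k) → Fin n, ∑ J : Fin (2*k) → Fin n,
          sgnIJ I J • altCast (show 2*(2*k) = 4*k by ring)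
            (wedgeList (2*k) fun a => Ω (I a) (J a)) := rfl
  rw [hP, aux_smul_compLinearMap]
  congr 1
  rw [step2, step4]
  refine Finset.sum_congr rfl fun T _ => ?_
  rw [step3 T]
end

section
/- Let (V, g) be an n-dimensional scalar product space with basis (e₁, …, e_n), let C be an algebraic curvature tensor on V with curvature operator Ĉ, and let Ω^{ij} ∈ ∧²V* be the 2-forms with Ω^{ij} = −Ω^{ji} determined by Ĉ(ξ) = Σ_{i,j∈[n]} Ω^{ij}(ξ) e_i ∧ e_j. Then for all 1 ≤ k ≤ ⌊n/2⌋, the kth *-power of Ĉ satisfies Ĉ^{*k} = Σ_{I ∈ [n]^{2k}} (Ω^{i₁i₂} ∧ ⋯ ∧ Ω^{i_{2k−1}i_{2k}}) ⊗ e_I. -/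
open ExteriorAlgebra

variable {V : Type} [AddCommGroup V] [Module ℝ V]

section StarPowerHelpers

open TensorProduct

lemma comp_append' {A B : Type} {p q : ℕ} (f : A → B) (a : Fin p → A) (b : Fin q → A) :
    (fun i => f (Fin.append a b i)) = Fin.append (fun i => f (a i)) (fun i => f (b i)) := by
  funext i
  induction i using Fin.addCases <;> simp

lemma iMulti_append {p q : ℕ} (a : Fin p → V) (b : Fin q → V) :
    ιMulti ℝ (p+q) (Fin.append a b) = ιMulti ℝ p a * ιMulti ℝ q b := by
  simp only [ιMulti_apply]
  rw [comp_append' (fun v : V => ι ℝ v) a b, List.ofFn_fin_append, List.prod_append]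

lemma altWedge_perm_sum {p q : ℕ} (α : V [⋀^Fin p]→ₗ[ℝ] ℝ) (β : V [⋀^Fin q]→ₗ[ℝ] ℝ)
    (x : Fin (p+q) → V) :
    ((p.factorial * q.factorial : ℕ) : ℝ) * altWedge α β x
      = ∑ σ : Equiv.Perm (Fin (p+q)), ((Equiv.Perm.sign σ : ℤ) : ℝ) *
          (α (fun i => x (σ (Fin.castAdd q i))) * β (fun j => x (σ (Fin.natAdd p j)))) := by
  have h := MultilinearMap.domCoprod_alternization_eq α β
  set L : (ℝ ⊗[ℝ] ℝ) →ₗ[ℝ] ℝ := (TensorProduct.lid ℝ ℝ).toLinearMap with hL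
  have h2 := congrArg (fun F : V [⋀^(Fin p ⊕ Fin q)]→ₗ[ℝ] (ℝ ⊗[ℝ] ℝ) =>
      L (F (fun s => x (finSumFinEquiv s)))) h
  simp only [MultilinearMap.alternatization_apply, AlternatingMap.smul_apply,
    MultilinearMap.domDomCongr_apply, MultilinearMap.domCoprod_apply,
    AlternatingMap.coe_multilinearMap, map_sum, Units.smul_def, map_zsmul,
    Fintype.card_fin, map_nsmul] at h2
  have hA : altWedge α β x = L ((α.domCoprod β) fun s => x (finSumFinEquiv s)) := rfl
  rw [hA, ← smul_eq_mul, Nat.cast_smul_eq_nsmul ℝ, ← h2]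
  refine Fintype.sum_equiv (Equiv.permCongr finSumFinEquiv) _ _ fun σ => ?_
  have hsgn : Equiv.Perm.sign ((Equiv.permCongr finSumFinEquiv) σ) = Equiv.Perm.sign σ :=
    Equiv.Perm.sign_permCongr finSumFinEquiv σ
  rw [hsgn]
  have e1 : ∀ i : Fin p, ((Equiv.permCongr finSumFinEquiv) σ) (Fin.castAdd q i)
      = finSumFinEquiv (σ (Sum.inl i)) := by
    intro i
    simp [Equiv.permCongr_apply, finSumFinEquiv_symm_apply_castAdd]
  have e2 : ∀ i : Fin q, ((Equiv.permCongr finSumFinEquiv) σ) (Fin.natAdd p i)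
      = finSumFinEquiv (σ (Sum.inr i)) := by
    intro i
    simp [Equiv.permCongr_apply, finSumFinEquiv_symm_apply_natAdd]
  simp only [e1, e2, hL, LinearEquiv.coe_coe, lid_tmul, smul_eq_mul, zsmul_eq_mul]

lemma altWedge_eq_inv_sum {p q : ℕ} (α : V [⋀^Fin p]→ₗ[ℝ] ℝ) (β : V [⋀^Fin q]→ₗ[ℝ] ℝ)
    (x : Fin (p+q) → V) :
    altWedge α β x = ((p.factorial * q.factorial : ℕ) : ℝ)⁻¹ *
      ∑ σ : Equiv.Perm (Fin (p+q)), ((Equiv.Perm.sign σ : ℤ) : ℝ) *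
          (α (fun i => x (σ (Fin.castAdd q i))) * β (fun j => x (σ (Fin.natAdd p j)))) := by
  rw [← altWedge_perm_sum]
  rw [inv_mul_cancel_left₀]
  exact_mod_cast Nat.mul_ne_zero p.factorial_ne_zero q.factorial_ne_zero

lemma altCast_apply_eq {a b : ℕ} (h : a = b) (ω : V [⋀^Fin a]→ₗ[ℝ] ℝ) (x : Fin b → V)
    (y : Fin a → V) (hxy : ∀ i, y i = x (Fin.cast h i)) : altCast h ω x = ω y := by
  have : altCast h ω x = ω (fun i => x (Fin.cast h i)) := rfl
  rw [this]
  congr 1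
  funext i
  exact (hxy i).symm

lemma altWedge_empty_left {q : ℕ} (α : V [⋀^Fin 0]→ₗ[ℝ] ℝ) {c : ℝ} (hα : ∀ v, α v = c)
    (β : V [⋀^Fin q]→ₗ[ℝ] ℝ) (x : Fin (0+q) → V) :
    altWedge α β x = c * β (fun i => x (finCongr (Nat.zero_add q).symm i)) := by
  rw [altWedge_eq_inv_sum]
  set e0 : Fin q ≃ Fin (0+q) := finCongr (Nat.zero_add q).symm with he0
  have key : ∀ σ : Equiv.Perm (Fin (0+q)),
      ((Equiv.Perm.sign σ : ℤ) : ℝ) *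
        (α (fun i => x (σ (Fin.castAdd q i))) * β (fun j => x (σ (Fin.natAdd 0 j))))
      = c * β (fun i => x (e0 i)) := by
    intro σ
    set σ' : Equiv.Perm (Fin q) := (Equiv.permCongr e0.symm) σ with hσ'
    have hβ : (fun j => x (σ (Fin.natAdd 0 j))) = (fun i => x (e0 i)) ∘ σ' := by
      funext j
      have : Fin.natAdd 0 j = e0 j := Fin.ext (Nat.zero_add _)
      simp only [Function.comp, hσ', Equiv.permCongr_apply, Equiv.symm_symm,
        Equiv.apply_symm_apply, this]
    rw [hα, hβ, AlternatingMap.map_perm]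
    have hsgn : Equiv.Perm.sign σ' = Equiv.Perm.sign σ :=
      Equiv.Perm.sign_permCongr e0.symm σ
    rw [hsgn]
    rcases Int.units_eq_one_or (Equiv.Perm.sign σ) with h | h <;> simp [h] <;> ring
  rw [Finset.sum_congr rfl (fun σ _ => key σ), Finset.sum_const, Finset.card_univ]
  have hcard : Fintype.card (Equiv.Perm (Fin (0+q))) = (0+q).factorial := by
    simp [Fintype.card_perm]
  rw [hcard, nsmul_eq_mul, ← mul_assoc]
  have harith : ((Nat.factorial 0 * q.factorial : ℕ) : ℝ)⁻¹ * (((0+q).factorial : ℕ) : ℝ) = 1 := by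
    have h1 : (0+q).factorial = q.factorial := by rw [Nat.zero_add]
    rw [h1, Nat.factorial_zero, one_mul]
    exact inv_mul_cancel₀ (by exact_mod_cast q.factorial_ne_zero)
  rw [harith, one_mul]

lemma wedgeList_succ_apply (m : ℕ) (ω : Fin (m+1) → (V [⋀^Fin 2]→ₗ[ℝ] ℝ))
    (x : Fin (2*(m+1)) → V) :
    wedgeList (m+1) ω x
      = altWedge (wedgeList m (fun a => ω a.castSucc)) (ω (Fin.last m)) x := by
  show altCast (V := V) (by ring) (altWedge (wedgeList m (fun a => ω a.castSucc)) (ω (Fin.last m))) x = _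
  exact altCast_apply_eq (by ring) _ x x (fun i => rfl)

lemma wedgeList_one (ω : Fin 1 → (V [⋀^Fin 2]→ₗ[ℝ] ℝ)) (x : Fin (2*1) → V) :
    wedgeList 1 ω x = ω 0 x := by
  refine (wedgeList_succ_apply 0 ω x).trans ?_
  have hα : ∀ v, wedgeList (V := V) 0 (fun a => ω a.castSucc) v = 1 := fun v => rfl
  refine (altWedge_empty_left _ hα (ω (Fin.last 0)) x).trans ?_
  rw [one_mul]
  have hxx : (fun i : Fin 2 => x (finCongr (Nat.zero_add 2).symm i)) = x := funext fun i => rfl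
  rw [hxx]
  rfl

lemma vec2_eta (w : Fin 2 → V) : ![w 0, w 1] = w := by
  funext i; fin_cases i <;> rfl

end StarPowerHelpers

/-- If `Ĉ(ξ) = Σ_{i,j} Ω^{ij}(ξ) e_i ∧ e_j` with `Ω^{ij} = -Ω^{ji}`, then
`Ĉ^{*k} = Σ_{I ∈ [n]^{2k}} (Ω^{i₁i₂} ∧ ⋯ ∧ Ω^{i_{2k-1}i_{2k}}) ⊗ e_I`. -/
theorem starPower_expansion
    {n : ℕ} [FiniteDimensional ℝ V]
    (g : LinearMap.BilinForm ℝ V)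
    (hgsymm : ∀ x y, g x y = g y x)
    (hgnd : ∀ x : V, (∀ y, g x y = 0) → x = 0)
    (e : Module.Basis (Fin n) ℝ V)
    (C : V → V → V → V → ℝ) (hC : IsACT C)
    (B2 : LinearMap.BilinForm ℝ (⋀[ℝ]^2 V)) (hB2 : IsInducedForm g 2 B2)
    (Chat : Module.End ℝ (⋀[ℝ]^2 V)) (hChat : IsCurvOp C B2 Chat)
    (Ω : Fin n → Fin n → (V [⋀^Fin 2]→ₗ[ℝ] ℝ))
    (hΩanti : ∀ i j, Ω i j = -Ω j i)
    (hΩ : ∀ u v : V, Chat (iMultiP 2 ![u, v])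
      = ∑ i : Fin n, ∑ j : Fin n, Ω i j ![u, v] • iMultiP 2 ![e i, e j])
    (P : (j : ℕ) → Module.End ℝ (⋀[ℝ]^(2*j) V))
    (hP1 : P 1 = Chat)
    (hPsucc : ∀ j : ℕ, 1 ≤ j → IsStarMul (2*j) 2 (P j) Chat (P (j+1)))
    (k : ℕ) (hk1 : 1 ≤ k) (hk2 : 2*k ≤ n) :
    ∀ x : Fin (2*k) → V,
      P k (iMultiP (2*k) x)
        = ∑ I : Fin (2*k) → Fin n,
            (wedgeList k (fun a => Ω (I ⟨2*(a : ℕ), by have := a.isLt; omega⟩)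
                                     (I ⟨2*(a : ℕ)+1, by have := a.isLt; omega⟩))) x •
              iMultiP (2*k) (fun a => e (I a)) := by
  clear hk2 hgsymm hgnd hC hB2 hChat hΩanti
  induction k, hk1 using Nat.le_induction with
  | base =>
    intro x
    have hx : (![x ⟨0, by omega⟩, x ⟨1, by omega⟩] : Fin 2 → V) = x := by
      funext i; fin_cases i <;> rfl
    have h2 := hΩ (x ⟨0, by omega⟩) (x ⟨1, by omega⟩)
    rw [hx] at h2
    have hP1x : P 1 (iMultiP (2*1) x) = Chat (iMultiP 2 x) := by
      rw [hP1]
    rw [hP1x, h2, ← Fintype.sum_prod_type']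
    refine Fintype.sum_equiv ((piFinTwoEquiv (fun _ => Fin n)).symm) _ _ fun q => ?_
    have hI0 : ((piFinTwoEquiv (fun _ => Fin n)).symm q) ⟨2*((0 : Fin 1) : ℕ), by omega⟩ = q.1 := by
      simp [piFinTwoEquiv]
    have hI1 : ((piFinTwoEquiv (fun _ => Fin n)).symm q) ⟨2*((0 : Fin 1) : ℕ)+1, by omega⟩ = q.2 := by
      simp [piFinTwoEquiv]
    have hco : (wedgeList 1 (fun a : Fin 1 =>
        Ω (((piFinTwoEquiv (fun _ => Fin n)).symm q) ⟨2*(a : ℕ), by have := a.isLt; omega⟩)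
          (((piFinTwoEquiv (fun _ => Fin n)).symm q) ⟨2*(a : ℕ)+1, by have := a.isLt; omega⟩))) x
        = Ω q.1 q.2 x := by
      rw [wedgeList_one]
      exact congrArg₂ (fun i j => (Ω i j) x) hI0 hI1
    have hvec : iMultiP (2*1) (fun a => e (((piFinTwoEquiv (fun _ => Fin n)).symm q) a))
        = iMultiP 2 ![e q.1, e q.2] := by
      refine congrArg _ ?_
      funext a; fin_cases a <;> simp [piFinTwoEquiv]
    rw [hco, hvec]
  | succ k hk IH =>
    intro x
    have hiM : ∀ (m : ℕ) (y : Fin m → V),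
        ((iMultiP m y : ⋀[ℝ]^m V) : ExteriorAlgebra ℝ V) = ιMulti ℝ m y := fun _ _ => rfl
    have hPk : ∀ v : Fin (2*k) → V, ((P k (iMultiP (2*k) v) : ⋀[ℝ]^(2*k) V) : ExteriorAlgebra ℝ V)
        = ∑ I : Fin (2*k) → Fin n,
            (wedgeList k (fun a => Ω (I ⟨2*(a : ℕ), by have := a.isLt; omega⟩)
                                     (I ⟨2*(a : ℕ)+1, by have := a.isLt; omega⟩))) v
              • ιMulti ℝ (2*k) (fun a => e (I a)) := by
      intro v
      rw [IH v]
      simp only [AddSubmonoidClass.coe_finset_sum, SetLike.val_smul, hiM]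
    have hChat' : ∀ w : Fin 2 → V, ((Chat (iMultiP 2 w) : ⋀[ℝ]^2 V) : ExteriorAlgebra ℝ V)
        = ∑ p : Fin 2 → Fin n,
            (Ω (p ⟨0, by omega⟩) (p ⟨1, by omega⟩)) w • ιMulti ℝ 2 (fun t => e (p t)) := by
      intro w
      have hw : (![w ⟨0, by omega⟩, w ⟨1, by omega⟩] : Fin 2 → V) = w := by
        funext i; fin_cases i <;> rfl
      have h2 := hΩ (w ⟨0, by omega⟩) (w ⟨1, by omega⟩)
      rw [hw] at h2
      rw [h2]
      simp only [AddSubmonoidClass.coe_finset_sum, SetLike.val_smul, hiM]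
      rw [← Fintype.sum_prod_type']
      refine Fintype.sum_equiv ((piFinTwoEquiv (fun _ => Fin n)).symm) _ _ fun q => ?_
      have hI0 : ((piFinTwoEquiv (fun _ => Fin n)).symm q) ⟨0, by omega⟩ = q.1 := by
        simp [piFinTwoEquiv]
      have hI1 : ((piFinTwoEquiv (fun _ => Fin n)).symm q) ⟨1, by omega⟩ = q.2 := by
        simp [piFinTwoEquiv]
      refine congrArg₂ (· • ·) (congrArg₂ (fun i j => (Ω i j) w) hI0.symm hI1.symm) ?_
      refine congrArg _ ?_
      funext t; fin_cases t <;> simp [piFinTwoEquiv]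
    have hs := hPsucc k hk x
    refine Subtype.coe_injective (hs.trans ?_)
    have hprod : ∀ σ : Equiv.Perm (Fin (2*k+2)),
        ((P k (iMultiP (2*k) (fun i => x (σ (Fin.castAdd 2 i)))) : ⋀[ℝ]^(2*k) V) :
            ExteriorAlgebra ℝ V)
          * ((Chat (iMultiP 2 (fun j => x (σ (Fin.natAdd (2*k) j)))) : ⋀[ℝ]^2 V) :
            ExteriorAlgebra ℝ V)
        = ∑ I : Fin (2*k) → Fin n, ∑ p : Fin 2 → Fin n,
            ((wedgeList k (fun a => Ω (I ⟨2*(a : ℕ), by have := a.isLt; omega⟩)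
                                      (I ⟨2*(a : ℕ)+1, by have := a.isLt; omega⟩)))
                (fun i => x (σ (Fin.castAdd 2 i)))
              * (Ω (p ⟨0, by omega⟩) (p ⟨1, by omega⟩)) (fun j => x (σ (Fin.natAdd (2*k) j))))
            • ιMulti ℝ (2*k+2) (fun a => e (Fin.append I p a)) := by
      intro σ
      rw [hPk _, hChat' _, Finset.sum_mul_sum]
      refine Finset.sum_congr rfl fun I _ => Finset.sum_congr rfl fun p _ => ?_
      rw [smul_mul_smul_comm]
      congr 1
      rw [← iMulti_append]
      exact congrArg _ (comp_append' e I p).symm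
    have main : (∑ σ : Equiv.Perm (Fin (2*k+2)), ((Equiv.Perm.sign σ : ℤ) : ℝ) •
          (((P k (iMultiP (2*k) (fun i => x (σ (Fin.castAdd 2 i)))) : ⋀[ℝ]^(2*k) V) :
              ExteriorAlgebra ℝ V)
            * ((Chat (iMultiP 2 (fun j => x (σ (Fin.natAdd (2*k) j)))) : ⋀[ℝ]^2 V) :
              ExteriorAlgebra ℝ V)))
        = ∑ σ : Equiv.Perm (Fin (2*k+2)), ∑ I : Fin (2*k) → Fin n, ∑ p : Fin 2 → Fin n,
            (((Equiv.Perm.sign σ : ℤ) : ℝ) *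
              ((wedgeList k (fun a => Ω (I ⟨2*(a : ℕ), by have := a.isLt; omega⟩)
                                        (I ⟨2*(a : ℕ)+1, by have := a.isLt; omega⟩)))
                  (fun i => x (σ (Fin.castAdd 2 i)))
                * (Ω (p ⟨0, by omega⟩) (p ⟨1, by omega⟩)) (fun j => x (σ (Fin.natAdd (2*k) j)))))
            • ιMulti ℝ (2*k+2) (fun a => e (Fin.append I p a)) := by
      refine Finset.sum_congr rfl fun σ _ => ?_
      rw [hprod σ, Finset.smul_sum]
      refine Finset.sum_congr rfl fun I _ => ?_
      rw [Finset.smul_sum]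
      refine Finset.sum_congr rfl fun p _ => ?_
      rw [smul_smul]
    rw [main]
    rw [Finset.sum_comm]
    simp only [AddSubmonoidClass.coe_finset_sum, SetLike.val_smul, hiM]
    rw [Finset.smul_sum]
    trans (∑ I : Fin (2*k) → Fin n, ∑ p : Fin 2 → Fin n,
        (altWedge (wedgeList k (fun a => Ω (I ⟨2*(a : ℕ), by have := a.isLt; omega⟩)
                                           (I ⟨2*(a : ℕ)+1, by have := a.isLt; omega⟩)))
           (Ω (p ⟨0, by omega⟩) (p ⟨1, by omega⟩)) x)
        • ιMulti ℝ (2*k+2) (fun a => e (Fin.append I p a)))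
    · refine Finset.sum_congr rfl fun I _ => ?_
      rw [Finset.sum_comm, Finset.smul_sum]
      refine Finset.sum_congr rfl fun p _ => ?_
      rw [← Finset.sum_smul, smul_smul]
      congr 1
      exact (altWedge_eq_inv_sum _ _ x).symm
    · rw [← Fintype.sum_prod_type']
      refine Fintype.sum_equiv
        (((Equiv.sumArrowEquivProdArrow (Fin (2*k)) (Fin 2) (Fin n)).symm.trans
          (Equiv.arrowCongr finSumFinEquiv (Equiv.refl (Fin n)))) :
          ((Fin (2*k) → Fin n) × (Fin 2 → Fin n)) ≃ (Fin (2*(k+1)) → Fin n)) _ _ fun pr => ?_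
      obtain ⟨I, p⟩ := pr
      have hEapp : ((((Equiv.sumArrowEquivProdArrow (Fin (2*k)) (Fin 2) (Fin n)).symm.trans
          (Equiv.arrowCongr finSumFinEquiv (Equiv.refl (Fin n)))) :
          ((Fin (2*k) → Fin n) × (Fin 2 → Fin n)) ≃ (Fin (2*(k+1)) → Fin n)) (I, p))
          = Fin.append I p := by
        funext a
        induction a using Fin.addCases with
        | left i =>
          exact ((congrArg (Sum.elim I p) (finSumFinEquiv_symm_apply_castAdd i)).trans
            rfl).trans (Fin.append_left I p i).symm
        | right i =>
          exact ((congrArg (Sum.elim I p) (finSumFinEquiv_symm_apply_natAdd i)).trans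
            rfl).trans (Fin.append_right I p i).symm
      rw [hEapp]
      refine congrArg₂ (· • ·) ?_ rfl
      rw [wedgeList_succ_apply]
      refine (congrArg₂ (fun (α : V [⋀^Fin (2*k)]→ₗ[ℝ] ℝ) (β : V [⋀^Fin 2]→ₗ[ℝ] ℝ) =>
        altWedge α β x) ?_ ?_).symm
      · refine congrArg (wedgeList k) (funext fun a => ?_)
        have e1 : Fin.append I p ⟨2*((a.castSucc : Fin (k+1)) : ℕ), by
              have := a.castSucc.isLt; omega⟩ = I ⟨2*(a : ℕ), by have := a.isLt; omega⟩ := by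
          have h' : (⟨2*((a.castSucc : Fin (k+1)) : ℕ), by have := a.castSucc.isLt; omega⟩ :
              Fin (2*(k+1))) = Fin.castAdd 2 ⟨2*(a : ℕ), show 2*(a : ℕ) < 2*k by
                have := a.isLt; omega⟩ := rfl
          rw [h', Fin.append_left]
        have e2 : Fin.append I p ⟨2*((a.castSucc : Fin (k+1)) : ℕ)+1, by
              have := a.castSucc.isLt; omega⟩ = I ⟨2*(a : ℕ)+1, by have := a.isLt; omega⟩ := by
          have h' : (⟨2*((a.castSucc : Fin (k+1)) : ℕ)+1, by have := a.castSucc.isLt; omega⟩ :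
              Fin (2*(k+1))) = Fin.castAdd 2 ⟨2*(a : ℕ)+1, show 2*(a : ℕ)+1 < 2*k by
                have := a.isLt; omega⟩ := rfl
          rw [h', Fin.append_left]
        exact congrArg₂ (fun i j => Ω i j) e1 e2
      · have e3 : Fin.append I p ⟨2*((Fin.last k : Fin (k+1)) : ℕ), by
              have := (Fin.last k).isLt; omega⟩ = p ⟨0, by omega⟩ := by
          have h' : (⟨2*((Fin.last k : Fin (k+1)) : ℕ), by have := (Fin.last k).isLt; omega⟩ :
              Fin (2*(k+1))) = Fin.natAdd (2*k) ⟨0, by omega⟩ := rfl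
          rw [h', Fin.append_right]
        have e4 : Fin.append I p ⟨2*((Fin.last k : Fin (k+1)) : ℕ)+1, by
              have := (Fin.last k).isLt; omega⟩ = p ⟨1, by omega⟩ := by
          have h' : (⟨2*((Fin.last k : Fin (k+1)) : ℕ)+1, by have := (Fin.last k).isLt; omega⟩ :
              Fin (2*(k+1))) = Fin.natAdd (2*k) ⟨1, by omega⟩ := rfl
          rw [h', Fin.append_right]
        exact congrArg₂ (fun i j => Ω i j) e3 e4
end
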